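/- arXiv:2008.06675 — 12 statements merged into one kernel-verified Lean document; each statement's English description precedes it below -/
import Mathlib

section
/- For any non-negative integer n, the alternating sum over i from 0 to n of (-1)^i * C(n,i) * C(n+i,i) equals (-1)^n. -/
open Finset

lemma lemA (n k : ℕ) (hk : k ≤ n) :
    ∑ i ∈ Finset.range (n + 1), (-1 : ℤ) ^ i * (n.choose i) * (i.choose k)
      = if k = n then (-1 : ℤ) ^ n else 0 := by
  have h0 : ∑ i ∈ Finset.range (n + 1), (-1 : ℤ) ^ i * (n.choose i) * (i.choose k)
      = ∑ i ∈ Finset.Ico k (n + 1), (-1 : ℤ) ^ i * (n.choose i) * (i.choose k) := by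
    rw [Finset.range_eq_Ico]
    refine (Finset.sum_subset (Finset.Ico_subset_Ico (Nat.zero_le _) le_rfl) ?_).symm
    intro i hi hni
    simp only [Finset.mem_Ico, not_and, not_lt, Nat.zero_le, true_implies] at hi hni
    have : i < k := by
      by_contra h
      exact absurd hi.2 (not_lt.mpr (hni (not_lt.mp h)))
    rw [Nat.choose_eq_zero_of_lt this]
    ring
  rw [h0, Finset.sum_Ico_eq_sum_range]
  have h1 : ∀ j ∈ Finset.range (n + 1 - k),
      (-1 : ℤ) ^ (k + j) * (n.choose (k + j)) * ((k + j).choose k)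
        = ((-1 : ℤ) ^ k * (n.choose k)) * ((-1 : ℤ) ^ j * ((n - k).choose j)) := by
    intro j hj
    rw [Finset.mem_range] at hj
    have hkj : k + j ≤ n := by omega
    have := Nat.choose_mul (n := n) (Nat.le_add_right k j)
    rw [Nat.add_sub_cancel_left] at this
    have key : ((n.choose (k + j)) * ((k + j).choose k) : ℤ)
        = (n.choose k) * ((n - k).choose j) := by exact_mod_cast this
    rw [pow_add]
    linear_combination ((-1 : ℤ) ^ k * (-1 : ℤ) ^ j) * key
  rw [Finset.sum_congr rfl h1, ← Finset.mul_sum]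
  have h2 : n + 1 - k = (n - k) + 1 := by omega
  rw [h2, Int.alternating_sum_range_choose]
  by_cases hkn : k = n
  · subst hkn; simp
  · have : n - k ≠ 0 := by omega
    simp [this, hkn]

theorem stmt0 (n : ℕ) :
    ∑ i ∈ Finset.range (n + 1), (-1 : ℤ) ^ i * (n.choose i) * ((n + i).choose i)
      = (-1 : ℤ) ^ n := by
  have hV : ∀ i ∈ Finset.range (n + 1), ((n + i).choose i : ℤ)
      = ∑ k ∈ Finset.range (n + 1), (n.choose k : ℤ) * (i.choose k) := by
    intro i hi
    rw [Finset.mem_range] at hi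
    have := Nat.add_choose_eq n i i
    rw [Finset.Nat.sum_antidiagonal_eq_sum_range_succ_mk] at this
    have h2 : ∑ k ∈ Finset.range (i + 1), n.choose k * i.choose (i - k)
        = ∑ k ∈ Finset.range (i + 1), n.choose k * i.choose k := by
      refine Finset.sum_congr rfl fun k hk => ?_
      rw [Finset.mem_range] at hk
      rw [Nat.choose_symm (by omega)]
    rw [h2] at this
    have h3 : ∑ k ∈ Finset.range (i + 1), n.choose k * i.choose k
        = ∑ k ∈ Finset.range (n + 1), n.choose k * i.choose k := by
      refine Finset.sum_subset (Finset.range_subset_range.mpr (by omega)) fun k _ hk => ?_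
      rw [Finset.mem_range, not_lt] at hk
      rw [Nat.choose_eq_zero_of_lt (by omega : i < k), Nat.mul_zero]
    rw [h3] at this
    rw [this]
    push_cast
    rfl
  calc ∑ i ∈ Finset.range (n + 1), (-1 : ℤ) ^ i * (n.choose i) * ((n + i).choose i)
      = ∑ i ∈ Finset.range (n + 1), ∑ k ∈ Finset.range (n + 1),
          (n.choose k : ℤ) * ((-1 : ℤ) ^ i * (n.choose i) * (i.choose k)) := by
        refine Finset.sum_congr rfl fun i hi => ?_
        rw [hV i hi, Finset.mul_sum]
        refine Finset.sum_congr rfl fun k _ => by ring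
    _ = ∑ k ∈ Finset.range (n + 1), (n.choose k : ℤ) *
          ∑ i ∈ Finset.range (n + 1), (-1 : ℤ) ^ i * (n.choose i) * (i.choose k) := by
        rw [Finset.sum_comm]
        exact Finset.sum_congr rfl fun k _ => (Finset.mul_sum _ _ _).symm
    _ = (-1 : ℤ) ^ n := by
        rw [Finset.sum_congr rfl (fun k hk => by
          rw [lemA n k (by rw [Finset.mem_range] at hk; omega)])]
        simp [mul_ite, mul_zero, Finset.sum_ite_eq']
end

section
/- For any non-negative integer n, the sum over i from 0 to n of (-1)^i * C(n,i) * C(n+i,i) * H_i equals 2*(-1)^n * H_n, where H_i is the i-th harmonic number. -/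
def H (n : ℕ) : ℚ := ∑ j ∈ Finset.range n, (1 : ℚ) / (j + 1)

lemma H_succ (n : ℕ) : H (n + 1) = H n + 1 / (n + 1) := by
  simp [H, Finset.sum_range_succ]

/-- WZ certificate, H-free part. -/
def g (n i : ℕ) : ℚ :=
  -2 * (-1) ^ i * (i : ℚ) ^ 2 * ((n + 1).choose i) * ((n + i).choose i) / ((n : ℚ) + 1) ^ 2

/-- Full WZ certificate. -/
def G (n i : ℕ) : ℚ :=
  g n i * H i + 2 * (-1) ^ i * (i : ℚ) * (n.choose i) * ((n + i).choose i) / ((n : ℚ) + 1) ^ 2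

lemma coreA (i m : ℕ) (a b x1 x2 x3 x4 : ℚ)
    (e1 : x1 * ((m : ℚ) + 1) = a * ((i : ℚ) + m + 1))
    (e2 : x2 * ((i : ℚ) + m + 1) = b * (2 * (i : ℚ) + m + 1))
    (e3 : x3 * ((i : ℚ) + 1) = a * ((i : ℚ) + m + 1))
    (e4 : x4 * ((i : ℚ) + 1) = b * (2 * (i : ℚ) + m + 1)) :
    x1 * x2 + a * b
      = (2 * ((i : ℚ) + 1) ^ 2 * x3 * x4 + 2 * (i : ℚ) ^ 2 * x1 * b) / ((i : ℚ) + m + 1) ^ 2 := by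
  have hm1 : (m : ℚ) + 1 ≠ 0 := by positivity
  have hi1 : (i : ℚ) + 1 ≠ 0 := by positivity
  have hN : (i : ℚ) + m + 1 ≠ 0 := by positivity
  have hx1 : x1 = a * ((i : ℚ) + m + 1) / ((m : ℚ) + 1) := by
    rw [eq_div_iff hm1]; exact e1
  have hx2 : x2 = b * (2 * (i : ℚ) + m + 1) / ((i : ℚ) + m + 1) := by
    rw [eq_div_iff hN]; exact e2
  have hx3 : x3 = a * ((i : ℚ) + m + 1) / ((i : ℚ) + 1) := by
    rw [eq_div_iff hi1]; exact e3
  have hx4 : x4 = b * (2 * (i : ℚ) + m + 1) / ((i : ℚ) + 1) := by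
    rw [eq_div_iff hi1]; exact e4
  subst hx1 hx2 hx3 hx4
  field_simp
  ring

lemma core (i m : ℕ) (a b x1 x2 x3 x4 x5 h : ℚ)
    (e1 : x1 * ((m : ℚ) + 1) = a * ((i : ℚ) + m + 1))
    (e2 : x2 * ((i : ℚ) + m + 1) = b * (2 * (i : ℚ) + m + 1))
    (e3 : x3 * ((i : ℚ) + 1) = a * ((i : ℚ) + m + 1))
    (e4 : x4 * ((i : ℚ) + 1) = b * (2 * (i : ℚ) + m + 1))
    (e5 : x5 * ((i : ℚ) + 1) = a * (m : ℚ)) :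
    x1 * x2 * h + a * b * h + 2 / ((i : ℚ) + m + 1) * (a * b)
      = (2 * ((i : ℚ) + 1) ^ 2 * x3 * x4 * (h + 1 / ((i : ℚ) + 1))
          - 2 * ((i : ℚ) + 1) * x5 * x4
          + 2 * (i : ℚ) ^ 2 * x1 * b * h - 2 * (i : ℚ) * a * b) / ((i : ℚ) + m + 1) ^ 2 := by
  have hm1 : (m : ℚ) + 1 ≠ 0 := by positivity
  have hi1 : (i : ℚ) + 1 ≠ 0 := by positivity
  have hN : (i : ℚ) + m + 1 ≠ 0 := by positivity
  have hx1 : x1 = a * ((i : ℚ) + m + 1) / ((m : ℚ) + 1) := by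
    rw [eq_div_iff hm1]; exact e1
  have hx2 : x2 = b * (2 * (i : ℚ) + m + 1) / ((i : ℚ) + m + 1) := by
    rw [eq_div_iff hN]; exact e2
  have hx3 : x3 = a * ((i : ℚ) + m + 1) / ((i : ℚ) + 1) := by
    rw [eq_div_iff hi1]; exact e3
  have hx4 : x4 = b * (2 * (i : ℚ) + m + 1) / ((i : ℚ) + 1) := by
    rw [eq_div_iff hi1]; exact e4
  have hx5 : x5 = a * (m : ℚ) / ((i : ℚ) + 1) := by
    rw [eq_div_iff hi1]; exact e5
  subst hx1 hx2 hx3 hx4 hx5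
  field_simp
  ring

lemma he1 (i m : ℕ) :
    (((i + m + 1).choose i : ℕ) : ℚ) * ((m : ℚ) + 1)
      = (((i + m).choose i : ℕ) : ℚ) * ((i : ℚ) + m + 1) := by
  have h := Nat.choose_mul_succ_eq (i + m) i
  rw [show i + m + 1 - i = m + 1 by omega] at h
  have h' := congrArg (fun t : ℕ => (t : ℚ)) h
  push_cast at h'
  linear_combination -h'

lemma he2 (i m : ℕ) :
    (((i + m + 1 + i).choose i : ℕ) : ℚ) * ((i : ℚ) + m + 1)
      = (((i + m + i).choose i : ℕ) : ℚ) * (2 * (i : ℚ) + m + 1) := by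
  have h := Nat.choose_mul_succ_eq (i + m + i) i
  rw [show i + m + i + 1 - i = i + m + 1 by omega,
      show i + m + i + 1 = i + m + 1 + i by omega] at h
  have h' := congrArg (fun t : ℕ => (t : ℚ)) h
  push_cast at h'
  linear_combination -h'

lemma he3 (i m : ℕ) :
    (((i + m + 1).choose (i + 1) : ℕ) : ℚ) * ((i : ℚ) + 1)
      = (((i + m).choose i : ℕ) : ℚ) * ((i : ℚ) + m + 1) := by
  have h : (i + m + 1) * (i + m).choose i = (i + m + 1).choose (i + 1) * (i + 1) :=
    Nat.add_one_mul_choose_eq (i + m) i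
  have h' := congrArg (fun t : ℕ => (t : ℚ)) h
  push_cast at h'
  linear_combination -h'

lemma he4 (i m : ℕ) :
    (((i + m + (i + 1)).choose (i + 1) : ℕ) : ℚ) * ((i : ℚ) + 1)
      = (((i + m + i).choose i : ℕ) : ℚ) * (2 * (i : ℚ) + m + 1) := by
  have h : (i + m + i + 1) * (i + m + i).choose i = (i + m + i + 1).choose (i + 1) * (i + 1) :=
    Nat.add_one_mul_choose_eq (i + m + i) i
  rw [show i + m + i + 1 = i + m + (i + 1) by omega] at h
  have h' := congrArg (fun t : ℕ => (t : ℚ)) h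
  push_cast at h'
  linear_combination -h'

lemma he5 (i m : ℕ) :
    (((i + m).choose (i + 1) : ℕ) : ℚ) * ((i : ℚ) + 1)
      = (((i + m).choose i : ℕ) : ℚ) * (m : ℚ) := by
  have h := Nat.choose_succ_right_eq (i + m) i
  rw [show i + m - i = m by omega] at h
  have h' := congrArg (fun t : ℕ => (t : ℚ)) h
  push_cast at h'
  linear_combination h'

/-- Central binomial doubling at the boundary. -/
lemma hdouble (n : ℕ) :
    (n + 1 + (n + 1)).choose (n + 1) = 2 * ((n + (n + 1)).choose (n + 1)) := by
  have h : (n + (n + 1) + 1).choose (n + 1)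
      = (n + (n + 1)).choose n + (n + (n + 1)).choose (n + 1) :=
    Nat.choose_succ_succ (n + (n + 1)) n
  have hsymm : (n + (n + 1)).choose n = (n + (n + 1)).choose (n + 1) := by
    rw [show (n + (n+1)).choose n = (n + (n+1)).choose ((n + (n+1)) - (n+1)) by
          congr 1; omega]
    exact Nat.choose_symm (by omega)
  rw [show n + 1 + (n + 1) = n + (n + 1) + 1 by omega]
  omega

lemma stepA (n i : ℕ) (h : i ≤ n + 1) :
    (-1 : ℚ) ^ i * ((n + 1).choose i) * ((n + 1 + i).choose i)
      + (-1 : ℚ) ^ i * (n.choose i) * ((n + i).choose i)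
      = g n (i + 1) - g n i := by
  rcases Nat.lt_or_ge i (n + 1) with hlt | hge
  · -- i ≤ n
    obtain ⟨m, rfl⟩ : ∃ m, n = i + m := ⟨n - i, by omega⟩
    have E := coreA i m ((i + m).choose i : ℚ) ((i + m + i).choose i : ℚ)
      ((i + m + 1).choose i : ℚ) ((i + m + 1 + i).choose i : ℚ)
      ((i + m + 1).choose (i + 1) : ℚ) ((i + m + (i + 1)).choose (i + 1) : ℚ)
      (he1 i m) (he2 i m) (he3 i m) (he4 i m)
    simp only [g]
    push_cast
    linear_combination ((-1 : ℚ) ^ i) * E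
  · -- i = n + 1
    have hieq : i = n + 1 := by omega
    subst hieq
    have h0 : n.choose (n + 1) = 0 := Nat.choose_eq_zero_of_lt (by omega)
    have h1 : (n + 1).choose (n + 1 + 1) = 0 := Nat.choose_eq_zero_of_lt (by omega)
    have h2 := hdouble n
    simp only [g, h0, h1, Nat.choose_self, h2]
    have hN : ((n : ℚ) + 1) ≠ 0 := by positivity
    push_cast
    field_simp
    ring

lemma key (n i : ℕ) (h : i ≤ n + 1) :
    (-1 : ℚ) ^ i * ((n + 1).choose i) * ((n + 1 + i).choose i) * H i
      + (-1 : ℚ) ^ i * (n.choose i) * ((n + i).choose i) * H i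
      + 2 / ((n : ℚ) + 1) * ((-1 : ℚ) ^ i * (n.choose i) * ((n + i).choose i))
      = G n (i + 1) - G n i := by
  rcases Nat.lt_or_ge i (n + 1) with hlt | hge
  · obtain ⟨m, rfl⟩ : ∃ m, n = i + m := ⟨n - i, by omega⟩
    have E := core i m ((i + m).choose i : ℚ) ((i + m + i).choose i : ℚ)
      ((i + m + 1).choose i : ℚ) ((i + m + 1 + i).choose i : ℚ)
      ((i + m + 1).choose (i + 1) : ℚ) ((i + m + (i + 1)).choose (i + 1) : ℚ)
      ((i + m).choose (i + 1) : ℚ) (H i)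
      (he1 i m) (he2 i m) (he3 i m) (he4 i m) (he5 i m)
    simp only [G, g, H_succ]
    push_cast
    linear_combination ((-1 : ℚ) ^ i) * E
  · have hieq : i = n + 1 := by omega
    subst hieq
    have h0 : n.choose (n + 1) = 0 := Nat.choose_eq_zero_of_lt (by omega)
    have h1 : (n + 1).choose (n + 1 + 1) = 0 := Nat.choose_eq_zero_of_lt (by omega)
    have h0' : n.choose (n + 1 + 1) = 0 := Nat.choose_eq_zero_of_lt (by omega)
    have h2 := hdouble n
    simp only [G, g, h0, h1, h0', Nat.choose_self, h2]
    have hN : ((n : ℚ) + 1) ≠ 0 := by positivity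
    push_cast
    field_simp
    ring

lemma g_zero (n : ℕ) : g n 0 = 0 := by simp [g]

lemma g_top (n : ℕ) : g n (n + 2) = 0 := by
  have h1 : (n + 1).choose (n + 2) = 0 := Nat.choose_eq_zero_of_lt (by omega)
  simp [g, h1]

lemma G_zero (n : ℕ) : G n 0 = 0 := by simp [G, g_zero]

lemma G_top (n : ℕ) : G n (n + 2) = 0 := by
  have h1 : n.choose (n + 2) = 0 := Nat.choose_eq_zero_of_lt (by omega)
  simp [G, g_top, h1]

/-- The alternating sum without harmonic numbers. -/
lemma altsum (n : ℕ) :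
    ∑ i ∈ Finset.range (n + 1), (-1 : ℚ) ^ i * (n.choose i) * ((n + i).choose i)
      = (-1 : ℚ) ^ n := by
  induction n with
  | zero => simp
  | succ n ih =>
    have hcong : ∀ i ∈ Finset.range (n + 2),
        (-1 : ℚ) ^ i * ((n + 1).choose i) * ((n + 1 + i).choose i)
          = (g n (i + 1) - g n i) - (-1 : ℚ) ^ i * (n.choose i) * ((n + i).choose i) := by
      intro i hi
      have hi' : i ≤ n + 1 := by
        have := Finset.mem_range.mp hi; omega
      linear_combination stepA n i hi'
    rw [Finset.sum_congr rfl hcong, Finset.sum_sub_distrib, Finset.sum_range_sub (g n),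
        g_top, g_zero]
    rw [Finset.sum_range_succ, ih]
    have h0 : n.choose (n + 1) = 0 := Nat.choose_eq_zero_of_lt (by omega)
    simp [h0]
    ring

theorem stmt1 (n : ℕ) :
    ∑ i ∈ Finset.range (n + 1),
        (-1 : ℚ) ^ i * (n.choose i) * ((n + i).choose i) * H i
      = 2 * (-1 : ℚ) ^ n * H n := by
  induction n with
  | zero => simp [H]
  | succ n ih =>
    have hcong : ∀ i ∈ Finset.range (n + 2),
        (-1 : ℚ) ^ i * ((n + 1).choose i) * ((n + 1 + i).choose i) * H i
          = (G n (i + 1) - G n i)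
            - (-1 : ℚ) ^ i * (n.choose i) * ((n + i).choose i) * H i
            - 2 / ((n : ℚ) + 1) * ((-1 : ℚ) ^ i * (n.choose i) * ((n + i).choose i)) := by
      intro i hi
      have hi' : i ≤ n + 1 := by
        have := Finset.mem_range.mp hi; omega
      linear_combination key n i hi'
    rw [Finset.sum_congr rfl hcong]
    rw [Finset.sum_sub_distrib, Finset.sum_sub_distrib, Finset.sum_range_sub (G n),
        G_top, G_zero]
    rw [← Finset.mul_sum]
    have h0 : n.choose (n + 1) = 0 := Nat.choose_eq_zero_of_lt (by omega)
    rw [Finset.sum_range_succ, Finset.sum_range_succ (fun i => (-1 : ℚ) ^ i * (n.choose i) * ((n + i).choose i)), ih, altsum]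
    have hN : ((n : ℚ) + 1) ≠ 0 := by positivity
    simp only [h0, Nat.cast_zero, mul_zero, zero_mul, add_zero]
    rw [H_succ]
    field_simp
    ring
end

section
/- For any non-negative integer n, the sum over i from 0 to n of (-1)^i * C(n,i) * C(n+i,i) * H_{n+i} equals 2*(-1)^n * H_n, where H_m is the m-th harmonic number. -/
open Polynomial Finset

namespace Stmt2Aux

noncomputable def A (i : ℕ) : ℚ[X] := ∏ k ∈ range i, (X + C ((k : ℚ) + 1))

noncomputable def Lp (n : ℕ) : ℚ[X] :=
  ∑ i ∈ range (n + 1), C ((-1 : ℚ) ^ i * (n.choose i) / i.factorial) * A i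

noncomputable def Rp (n : ℕ) : ℚ[X] :=
  C ((-1 : ℚ) ^ n / n.factorial) * ∏ k ∈ range n, (X - C (k : ℚ))

lemma A_succ (i : ℕ) : A (i + 1) = A i * (X + C ((i : ℚ) + 1)) := prod_range_succ _ _

-- the key Nat identity for the telescoping coefficients
lemma nat_id (n i : ℕ) :
    (n + i + 2) * n.choose (i + 1) + (i + 1) * n.choose i
      = (n + 1) * (n + 1).choose (i + 1) := by
  rcases le_or_gt n i with h | h
  · rcases eq_or_lt_of_le h with rfl | h'
    · simp [Nat.choose_succ_succ, Nat.choose_eq_zero_of_lt (Nat.lt_succ_self n)]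
    · rw [Nat.choose_eq_zero_of_lt (by omega), Nat.choose_eq_zero_of_lt (by omega),
        Nat.choose_eq_zero_of_lt (by omega)]
      ring
  · have hp : (n + 1).choose (i + 1) = n.choose i + n.choose (i + 1) :=
      Nat.choose_succ_succ n i
    have hr : n.choose (i + 1) * (i + 1) = n.choose i * (n - i) :=
      Nat.choose_succ_right_eq n i
    have hni : n - i + i = n := Nat.sub_add_cancel h.le
    nlinarith [hr, hp, hni]

-- coefficient identity over ℚ
lemma coeff_id (n i : ℕ) :
    ((n : ℚ) + 1) * ((-1 : ℚ) ^ (i + 1) * ((n + 1).choose (i + 1)) / (i + 1).factorial)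
      = ((n : ℚ) + i + 2) * ((-1 : ℚ) ^ (i + 1) * (n.choose (i + 1)) / (i + 1).factorial)
          - ((-1 : ℚ) ^ i * (n.choose i) / i.factorial) := by
  have h := nat_id n i
  have hQ : ((n : ℚ) + i + 2) * (n.choose (i + 1) : ℚ) + ((i : ℚ) + 1) * (n.choose i : ℚ)
      = ((n : ℚ) + 1) * ((n + 1).choose (i + 1) : ℚ) := by
    exact_mod_cast congrArg (fun x : ℕ => (x : ℚ)) h
  have hfac : ((i + 1).factorial : ℚ) = ((i : ℚ) + 1) * (i.factorial : ℚ) := by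
    push_cast [Nat.factorial_succ]; ring
  have hf0 : (i.factorial : ℚ) ≠ 0 := Nat.cast_ne_zero.2 i.factorial_ne_zero
  have hi1 : ((i : ℚ) + 1) ≠ 0 := by positivity
  rw [hfac]
  have h2 : (((i:ℚ)+1) * i.factorial) ≠ 0 := by positivity
  field_simp
  linear_combination ((-1:ℚ)^i) * hQ

lemma Lp_succ (n : ℕ) :
    C ((n : ℚ) + 1) * Lp (n + 1) = (C (n : ℚ) - X) * Lp n := by
  have hLn : Lp n = ∑ i ∈ range (n + 2), C ((-1 : ℚ) ^ i * (n.choose i) / i.factorial) * A i := by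
    rw [Lp, Finset.sum_range_succ (f := fun i => C ((-1 : ℚ) ^ i * (n.choose i) / i.factorial) * A i) (n + 1)]
    simp [Nat.choose_eq_zero_of_lt (Nat.lt_succ_self n)]
  rw [Lp, hLn, Finset.mul_sum, Finset.mul_sum]
  have hterm : ∀ i : ℕ, (C (n : ℚ) - X) * (C ((-1 : ℚ) ^ i * (n.choose i) / i.factorial) * A i)
      = C (((n : ℚ) + i + 1) * ((-1 : ℚ) ^ i * (n.choose i) / i.factorial)) * A i
        - C ((-1 : ℚ) ^ i * (n.choose i) / i.factorial) * A (i + 1) := by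
    intro i
    rw [A_succ]
    simp only [C_mul, C_add, C_1, map_ofNat]
    push_cast
    ring
  rw [Finset.sum_congr rfl fun i _ => hterm i, Finset.sum_sub_distrib]
  rw [eq_sub_iff_add_eq]
  have hg : ∑ i ∈ range (n + 2), C ((-1 : ℚ) ^ i * (n.choose i) / i.factorial) * A (i + 1)
      = ∑ i ∈ range (n + 1), C ((-1 : ℚ) ^ i * (n.choose i) / i.factorial) * A (i + 1) := by
    rw [Finset.sum_range_succ]
    simp [Nat.choose_eq_zero_of_lt (Nat.lt_succ_self n)]
  rw [hg, Finset.sum_range_succ' (f := fun i => C ((n : ℚ) + 1) * (C ((-1 : ℚ) ^ i * ((n + 1).choose i) / i.factorial) * A i)) (n + 1),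
      Finset.sum_range_succ' (f := fun i => C (((n : ℚ) + i + 1) * ((-1 : ℚ) ^ i * (n.choose i) / i.factorial)) * A i) (n + 1)]
  have h0 : C ((n : ℚ) + 1) * (C ((-1 : ℚ) ^ 0 * (((n + 1).choose 0 : ℕ) : ℚ) / (Nat.factorial 0 : ℕ)) * A 0)
      = C (((n : ℚ) + 0 + 1) * ((-1 : ℚ) ^ 0 * ((n.choose 0 : ℕ) : ℚ) / (Nat.factorial 0 : ℕ))) * A 0 := by
    simp
  rw [add_right_comm, h0]
  congr 1
  rw [← Finset.sum_add_distrib]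
  refine Finset.sum_congr rfl fun i _ => ?_
  have hc := coeff_id n i
  have : C ((n : ℚ) + 1) * C ((-1 : ℚ) ^ (i + 1) * (((n + 1).choose (i + 1) : ℕ) : ℚ) / ((i + 1).factorial : ℕ))
      = C (((n : ℚ) + (i + 1) + 1) * ((-1 : ℚ) ^ (i + 1) * ((n.choose (i + 1) : ℕ) : ℚ) / ((i + 1).factorial : ℕ)))
        - C ((-1 : ℚ) ^ i * ((n.choose i : ℕ) : ℚ) / (i.factorial : ℕ)) := by
    rw [← C_mul, ← C_sub]
    congr 1
    rw [hc]
    push_cast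
    ring
  rw [← mul_assoc, this, A_succ]
  push_cast
  ring

lemma Rp_succ (n : ℕ) :
    C ((n : ℚ) + 1) * Rp (n + 1) = (C (n : ℚ) - X) * Rp n := by
  rw [Rp, Rp, Finset.prod_range_succ]
  have h : C ((n : ℚ) + 1) * C ((-1 : ℚ) ^ (n + 1) / ((n + 1).factorial : ℕ))
      = C (-((-1 : ℚ) ^ n / (n.factorial : ℕ))) := by
    rw [← C_mul]
    congr 1
    rw [Nat.factorial_succ]
    have hf0 : ((n.factorial : ℕ) : ℚ) ≠ 0 := Nat.cast_ne_zero.2 n.factorial_ne_zero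
    have hn1 : ((n : ℚ) + 1) ≠ 0 := by positivity
    push_cast
    field_simp
    ring
  calc C ((n : ℚ) + 1) * (C ((-1 : ℚ) ^ (n + 1) / ((n + 1).factorial : ℕ))
          * ((∏ k ∈ range n, (X - C (k : ℚ))) * (X - C (n : ℚ))))
      = (C ((n : ℚ) + 1) * C ((-1 : ℚ) ^ (n + 1) / ((n + 1).factorial : ℕ)))
          * ((∏ k ∈ range n, (X - C (k : ℚ))) * (X - C (n : ℚ))) := by ring
    _ = C (-((-1 : ℚ) ^ n / (n.factorial : ℕ)))
          * ((∏ k ∈ range n, (X - C (k : ℚ))) * (X - C (n : ℚ))) := by rw [h]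
    _ = (C (n : ℚ) - X) * (C ((-1 : ℚ) ^ n / (n.factorial : ℕ)) * ∏ k ∈ range n, (X - C (k : ℚ))) := by
          rw [map_neg]; ring

lemma key (n : ℕ) : Lp n = Rp n := by
  induction n with
  | zero => simp [Lp, Rp, A]
  | succ n ih =>
      have h1 := Lp_succ n
      have h2 := Rp_succ n
      rw [ih] at h1
      have hC : (C ((n : ℚ) + 1)) ≠ 0 := by
        simp only [ne_eq, Polynomial.C_eq_zero]
        positivity
      exact mul_left_cancel₀ hC (h1.trans h2.symm)

lemma evalA (n i : ℕ) : (A i).eval (n : ℚ) = (i.factorial : ℚ) * (((n + i).choose i : ℕ) : ℚ) := by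
  induction i with
  | zero => simp [A]
  | succ i ih =>
      rw [A_succ, eval_mul, ih]
      have h := Nat.add_one_mul_choose_eq (n + i) i
      have hQ : ((n : ℚ) + i + 1) * (((n + i).choose i : ℕ) : ℚ)
          = (((n + i + 1).choose (i + 1) : ℕ) : ℚ) * ((i : ℚ) + 1) := by
        exact_mod_cast congrArg (fun x : ℕ => (x : ℚ)) h
      simp only [eval_add, eval_X, eval_C]
      rw [Nat.factorial_succ]
      have : n + (i + 1) = n + i + 1 := by omega
      rw [this]
      push_cast
      linear_combination (i.factorial : ℚ) * hQ

lemma evalDA (n i : ℕ) : (derivative (A i)).eval (n : ℚ)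
    = (A i).eval (n : ℚ) * ∑ j ∈ range i, 1 / ((n : ℚ) + j + 1) := by
  induction i with
  | zero => simp [A]
  | succ i ih =>
      rw [A_succ, derivative_mul, derivative_X_add_C, eval_add, eval_mul, eval_mul, ih]
      simp only [eval_add, eval_X, eval_C, eval_one, mul_one]
      rw [Finset.sum_range_succ]
      have hne : ((n : ℚ) + i + 1) ≠ 0 := by positivity
      field_simp
      simp only [eval_mul, eval_add, eval_X, eval_C]
      ring

lemma prod_sub_eval (n : ℕ) : ∏ k ∈ range n, ((n : ℚ) - k) = (n.factorial : ℚ) := by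
  have hN : ∏ k ∈ range n, (n - k) = n.factorial := by
    have h1 : ∏ j ∈ range n, (n - (n - 1 - j)) = ∏ j ∈ range n, (n - j) :=
      Finset.prod_range_reflect (fun j => n - j) n
    have h2 : ∏ j ∈ range n, (n - (n - 1 - j)) = ∏ j ∈ range n, (j + 1) := by
      refine Finset.prod_congr rfl fun j hj => ?_
      have := Finset.mem_range.1 hj
      omega
    rw [← h1, h2, Finset.prod_range_add_one_eq_factorial]
  have hc : ∏ k ∈ range n, ((n : ℚ) - k) = ∏ k ∈ range n, (((n - k : ℕ) : ℕ) : ℚ) := by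
    refine Finset.prod_congr rfl fun k hk => ?_
    rw [Nat.cast_sub (le_of_lt (Finset.mem_range.1 hk))]
  rw [hc, ← Nat.cast_prod, hN]

lemma evalDprod (n : ℕ) : ∀ m, m ≤ n → (derivative (∏ k ∈ range m, (X - C (k : ℚ)))).eval (n : ℚ)
    = (∏ k ∈ range m, ((n : ℚ) - k)) * ∑ j ∈ range m, 1 / ((n : ℚ) - j) := by
  intro m
  induction m with
  | zero => simp
  | succ m ih =>
      intro hm
      have hmn : m < n := hm
      rw [Finset.prod_range_succ, derivative_mul, derivative_sub, derivative_X, derivative_C,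
        eval_add, eval_mul, eval_mul, ih (le_of_lt hmn)]
      simp only [eval_prod, eval_sub, eval_X, eval_C, sub_zero, eval_one, mul_one]
      rw [Finset.prod_range_succ, Finset.sum_range_succ]
      have hpos : (0 : ℚ) < (n : ℚ) - m := by
        have : (m : ℚ) < (n : ℚ) := by exact_mod_cast hmn
        linarith
      have hne : ((n : ℚ) - m) ≠ 0 := ne_of_gt hpos
      field_simp

lemma sum_inv_refl (n : ℕ) : ∑ j ∈ range n, 1 / ((n : ℚ) - j) = H n := by
  have h1 : ∑ j ∈ range n, (1 : ℚ) / (n - (n - 1 - j) : ℕ) = ∑ j ∈ range n, (1 : ℚ) / ((n - j : ℕ)) :=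
    Finset.sum_range_reflect (fun j => (1 : ℚ) / ((n - j : ℕ))) n
  have h2 : ∑ j ∈ range n, (1 : ℚ) / (n - (n - 1 - j) : ℕ) = H n := by
    rw [H]
    refine Finset.sum_congr rfl fun j hj => ?_
    have := Finset.mem_range.1 hj
    have hx : n - (n - 1 - j) = j + 1 := by omega
    rw [hx]
    push_cast
    ring
  have h3 : ∑ j ∈ range n, 1 / ((n : ℚ) - j) = ∑ j ∈ range n, (1 : ℚ) / ((n - j : ℕ)) := by
    refine Finset.sum_congr rfl fun j hj => ?_
    rw [Nat.cast_sub (le_of_lt (Finset.mem_range.1 hj))]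
  rw [h3, ← h1, h2]

lemma sum1 (n : ℕ) :
    ∑ i ∈ range (n + 1), (-1 : ℚ) ^ i * (n.choose i) * ((n + i).choose i) = (-1 : ℚ) ^ n := by
  have h := congrArg (Polynomial.eval (n : ℚ)) (key n)
  have hL : (Lp n).eval (n : ℚ)
      = ∑ i ∈ range (n + 1), (-1 : ℚ) ^ i * (n.choose i) * ((n + i).choose i) := by
    rw [Lp, eval_finset_sum]
    refine Finset.sum_congr rfl fun i _ => ?_
    rw [eval_mul, eval_C, evalA]
    have hf0 : ((i.factorial : ℕ) : ℚ) ≠ 0 := Nat.cast_ne_zero.2 i.factorial_ne_zero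
    field_simp
  have hR : (Rp n).eval (n : ℚ) = (-1 : ℚ) ^ n := by
    rw [Rp, eval_mul, eval_C, eval_prod]
    simp only [eval_sub, eval_X, eval_C]
    rw [prod_sub_eval]
    have hf0 : ((n.factorial : ℕ) : ℚ) ≠ 0 := Nat.cast_ne_zero.2 n.factorial_ne_zero
    field_simp
  rw [hL, hR] at h
  exact h

lemma sum2 (n : ℕ) :
    ∑ i ∈ range (n + 1), (-1 : ℚ) ^ i * (n.choose i) * ((n + i).choose i)
        * (∑ j ∈ range i, 1 / ((n : ℚ) + j + 1))
      = (-1 : ℚ) ^ n * H n := by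
  have h := congrArg (fun p : ℚ[X] => (derivative p).eval (n : ℚ)) (key n)
  have hL : (derivative (Lp n)).eval (n : ℚ)
      = ∑ i ∈ range (n + 1), (-1 : ℚ) ^ i * (n.choose i) * ((n + i).choose i)
          * (∑ j ∈ range i, 1 / ((n : ℚ) + j + 1)) := by
    rw [Lp, map_sum, eval_finset_sum]
    refine Finset.sum_congr rfl fun i _ => ?_
    rw [derivative_C_mul, eval_mul, eval_C, evalDA, evalA]
    have hf0 : ((i.factorial : ℕ) : ℚ) ≠ 0 := Nat.cast_ne_zero.2 i.factorial_ne_zero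
    field_simp
  have hR : (derivative (Rp n)).eval (n : ℚ) = (-1 : ℚ) ^ n * H n := by
    rw [Rp, derivative_C_mul, eval_mul, eval_C, evalDprod n n le_rfl, prod_sub_eval, sum_inv_refl]
    have hf0 : ((n.factorial : ℕ) : ℚ) ≠ 0 := Nat.cast_ne_zero.2 n.factorial_ne_zero
    field_simp
  rw [hL, hR] at h
  exact h

end Stmt2Aux

theorem stmt2 (n : ℕ) :
    ∑ i ∈ Finset.range (n + 1),
        (-1 : ℚ) ^ i * (n.choose i) * ((n + i).choose i) * H (n + i)
      = 2 * (-1 : ℚ) ^ n * H n := by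
  have hH : ∀ i : ℕ, H (n + i) = H n + ∑ j ∈ Finset.range i, 1 / ((n : ℚ) + j + 1) := by
    intro i
    rw [H, H, Finset.sum_range_add]
    congr 1
    refine Finset.sum_congr rfl fun j _ => ?_
    push_cast
    ring
  have hsplit : ∀ i : ℕ, (-1 : ℚ) ^ i * (n.choose i) * ((n + i).choose i) * H (n + i)
      = (-1 : ℚ) ^ i * (n.choose i) * ((n + i).choose i) * H n
        + (-1 : ℚ) ^ i * (n.choose i) * ((n + i).choose i)
            * (∑ j ∈ Finset.range i, 1 / ((n : ℚ) + j + 1)) := by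
    intro i
    rw [hH i]
    ring
  rw [Finset.sum_congr rfl fun i _ => hsplit i, Finset.sum_add_distrib, ← Finset.sum_mul,
    Stmt2Aux.sum1, Stmt2Aux.sum2]
  ring
end

section
/- For any non-negative integers n > i, the sum over k from i to n-1 of ((4k+1)/(-3)^k) * C(k+3i, 4i) equals (n-i) * C(n+3i, 4i) * (-3)^{1-n}. -/
theorem stmt3 (n i : ℕ) (h : i < n) :
    ∑ k ∈ Finset.Ico i n, (4 * (k : ℚ) + 1) / (-3 : ℚ) ^ k * ((k + 3 * i).choose (4 * i))
      = ((n : ℚ) - i) * ((n + 3 * i).choose (4 * i)) * (-3 : ℚ) ^ ((1 : ℤ) - n) := by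
  induction n, h using Nat.le_induction with
  | base =>
    rw [Finset.sum_Ico_succ_top (le_refl i), Finset.Ico_self, Finset.sum_empty]
    have h1 : i + 3 * i = 4 * i := by ring
    have h2 : i + 1 + 3 * i = 4 * i + 1 := by ring
    rw [h1, h2, Nat.choose_self, Nat.choose_succ_self_right]
    have h3 : ((1 : ℤ) - (i + 1 : ℕ)) = -(i : ℤ) := by push_cast; ring
    rw [h3, zpow_neg, zpow_natCast]
    push_cast
    field_simp
    ring
  | succ n hn ih =>
    rw [Finset.sum_Ico_succ_top (le_of_lt hn), ih]
    have key : ((n + 3*i).choose (4*i) : ℚ) * (n + 3*i + 1)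
        = ((n + 1 + 3*i).choose (4*i)) * ((n : ℚ) + 1 - i) := by
      have := Nat.choose_mul_succ_eq (n + 3*i) (4*i)
      have hsub : n + 3*i + 1 - 4*i = n + 1 - i := by omega
      rw [hsub] at this
      have h4 : n + 1 + 3*i = n + 3*i + 1 := by ring
      rw [h4]
      have hc : ((n + 3*i).choose (4*i) * (n + 3*i + 1) : ℚ)
          = ((n + 3*i + 1).choose (4*i) * (n + 1 - i : ℕ) : ℚ) := by
        exact_mod_cast congrArg (Nat.cast : ℕ → ℚ) this
      rw [hc, Nat.cast_sub (by omega)]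
      push_cast
      ring
    have h3 : ((1 : ℤ) - (n : ℕ)) = 1 - (n : ℤ) := by push_cast; ring
    have h5 : ((1 : ℤ) - (n + 1 : ℕ)) = -(n : ℤ) := by push_cast; ring
    rw [h5, zpow_neg, zpow_natCast]
    rw [zpow_sub₀ (by norm_num : (-3:ℚ) ≠ 0), zpow_one, zpow_natCast]
    have hp : ((-3:ℚ) ^ n) ≠ 0 := by positivity
    field_simp
    push_cast
    linear_combination key
end

section
/- For any non-negative integers n > i, the sum over k from i to n-1 of (-3)^k * (4k+3) * C(k+i, 4i) equals 3*(n-3i) * C(n+i, 4i) * (-3)^{n-1}. -/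
lemma aux_choose (m r : ℕ) :
    ((m : ℤ) + 1 - r) * ((m + 1).choose r) = ((m : ℤ) + 1) * (m.choose r) := by
  cases r with
  | zero => simp
  | succ s =>
    have h1 : (m + 1) * m.choose s = (m + 1).choose (s + 1) * (s + 1) :=
      Nat.add_one_mul_choose_eq m s
    have h2 : (m + 1).choose (s + 1) = m.choose s + m.choose (s + 1) :=
      Nat.choose_succ_succ m s
    have h1' : ((m : ℤ) + 1) * m.choose s = ((m + 1).choose (s + 1) : ℤ) * (s + 1) := by
      exact_mod_cast congrArg (Nat.cast : ℕ → ℤ) h1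
    have h2' : ((m + 1).choose (s + 1) : ℤ) = m.choose s + m.choose (s + 1) := by
      exact_mod_cast congrArg (Nat.cast : ℕ → ℤ) h2
    push_cast
    nlinarith [h1', h2']

theorem stmt4 (n i : ℕ) (h : i < n) :
    ∑ k ∈ Finset.Ico i n, (-3 : ℤ) ^ k * (4 * (k : ℤ) + 3) * ((k + i).choose (4 * i))
      = 3 * ((n : ℤ) - 3 * i) * ((n + i).choose (4 * i)) * (-3 : ℤ) ^ (n - 1) := by
  induction n, h using Nat.le_induction with
  | base =>
    rw [Finset.sum_Ico_succ_top (le_refl i), Finset.Ico_self, Finset.sum_empty, zero_add]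
    rcases Nat.eq_zero_or_pos i with rfl | hi
    · norm_num
    · have h1 : (i + i).choose (4 * i) = 0 := Nat.choose_eq_zero_of_lt (by omega)
      have h2 : (i + 1 + i).choose (4 * i) = 0 := Nat.choose_eq_zero_of_lt (by omega)
      rw [h1, h2]
      ring
  | succ n hn ih =>
    rw [Finset.sum_Ico_succ_top (by omega), ih]
    have hn1 : n - 1 + 1 = n := by omega
    have key := aux_choose (n + i) (4 * i)
    have hc : ((n + 1 + i).choose (4 * i) : ℤ) = ((n + i + 1).choose (4 * i) : ℤ) := by
      norm_num [Nat.add_right_comm]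
    rw [hc]
    push_cast at key ⊢
    have hpow : (-3 : ℤ) ^ n = (-3) ^ (n - 1) * (-3) := by
      rw [← pow_succ, hn1]
    rw [hpow]
    linear_combination (9 : ℤ) * (-3:ℤ)^(n-1) * key
end

section
/- For any non-negative integers n > i, the sum over k from i to n-1 of (2k+1) * C(k+i, 2i) * C(2i, i) equals (n^2/(i+1)) * C(n-1, i) * C(n+i, i). -/
open Nat Finset
lemma key1 (m i : ℕ) (h : i ≤ m) :
    (m + i).choose (2 * i) * (2 * i).choose i = (m + i).choose i * m.choose i := by
  have := Nat.choose_mul (n := m + i) (k := 2 * i) (s := i) (by omega)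
  simpa [two_mul, Nat.add_sub_cancel, show m + i - i = m by omega] using this

lemma key2 (m i : ℕ) : (m + 1) * (m + 1 + i).choose i = (m + 1 + i) * (m + i).choose i := by
  have hf : ((m + 1 + i).choose i : ℕ) * (i ! * (m + 1)!) = (m + 1 + i)! := by
    have := Nat.choose_mul_factorial_mul_factorial (n := m + 1 + i) (k := i) (by omega)
    simpa [show m + 1 + i - i = m + 1 by omega, mul_assoc] using this
  have hg : ((m + i).choose i : ℕ) * (i ! * m !) = (m + i)! := by
    have := Nat.choose_mul_factorial_mul_factorial (n := m + i) (k := i) (by omega)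
    simpa [show m + i - i = m by omega, mul_assoc] using this
  have hfac : (m + 1 + i)! = (m + 1 + i) * (m + i)! := by
    rw [show m + 1 + i = (m + i) + 1 by omega, Nat.factorial_succ]
  have hfac2 : (m + 1)! = (m + 1) * m ! := Nat.factorial_succ m
  have hpos : 0 < i ! * m ! := Nat.mul_pos (Nat.factorial_pos _) (Nat.factorial_pos _)
  apply Nat.eq_of_mul_eq_mul_right hpos
  calc (m + 1) * (m + 1 + i).choose i * (i ! * m !)
      = (m + 1 + i).choose i * (i ! * ((m + 1) * m !)) := by ring
    _ = (m + 1 + i).choose i * (i ! * (m + 1)!) := by rw [hfac2]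
    _ = (m + 1 + i)! := hf
    _ = (m + 1 + i) * (m + i)! := hfac
    _ = (m + 1 + i) * ((m + i).choose i * (i ! * m !)) := by rw [hg]
    _ = (m + 1 + i) * (m + i).choose i * (i ! * m !) := by ring

lemma key3 (p i : ℕ) (h : i ≤ p + 1) :
    (p + 1) * p.choose i = (p + 1 - i) * (p + 1).choose i := by
  rcases Nat.lt_or_ge p i with hpi | hpi
  · have hip : i = p + 1 := by omega
    subst hip
    simp [Nat.choose_eq_zero_of_lt (Nat.lt_succ_self p)]
  · have hf : ((p + 1).choose i : ℕ) * (i ! * (p + 1 - i)!) = (p + 1)! := by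
      have := Nat.choose_mul_factorial_mul_factorial (n := p + 1) (k := i) (by omega)
      simpa [mul_assoc] using this
    have hg : (p.choose i : ℕ) * (i ! * (p - i)!) = p ! := by
      have := Nat.choose_mul_factorial_mul_factorial (n := p) (k := i) hpi
      simpa [mul_assoc] using this
    have hfac : (p + 1)! = (p + 1) * p ! := Nat.factorial_succ p
    have hfac2 : (p + 1 - i)! = (p + 1 - i) * (p - i)! := by
      rw [show p + 1 - i = (p - i) + 1 by omega, Nat.factorial_succ]
    have hpos : 0 < i ! * (p - i)! := Nat.mul_pos (Nat.factorial_pos _) (Nat.factorial_pos _)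
    apply Nat.eq_of_mul_eq_mul_right hpos
    calc (p + 1) * p.choose i * (i ! * (p - i)!)
        = (p + 1) * (p.choose i * (i ! * (p - i)!)) := by ring
      _ = (p + 1) * p ! := by rw [hg]
      _ = (p + 1)! := hfac.symm
      _ = (p + 1).choose i * (i ! * (p + 1 - i)!) := hf.symm
      _ = (p + 1).choose i * (i ! * ((p + 1 - i) * (p - i)!)) := by rw [hfac2]
      _ = (p + 1 - i) * (p + 1).choose i * (i ! * (p - i)!) := by ring

theorem stmt5 (n i : ℕ) (h : i < n) :
    ∑ k ∈ Finset.Ico i n, (2 * (k : ℚ) + 1) * ((k + i).choose (2 * i)) * ((2 * i).choose i)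
      = (n : ℚ) ^ 2 / ((i : ℚ) + 1) * ((n - 1).choose i) * ((n + i).choose i) := by
  have hi1 : ((i : ℚ) + 1) ≠ 0 := by positivity
  induction n with
  | zero => omega
  | succ m ih =>
    rcases Nat.lt_or_ge i m with him | him
    · rw [Finset.sum_Ico_succ_top (by omega : i ≤ m), ih him]
      have hm1 : (m + 1 - 1 : ℕ) = m := by omega
      have hm1' : (m - 1 + 1 : ℕ) = m := by omega
      rw [hm1]
      have e1 : ((m + i).choose (2 * i) : ℚ) * ((2 * i).choose i)
          = ((m + i).choose i) * (m.choose i) := by exact_mod_cast key1 m i him.le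
      have e2 : ((m : ℚ) + 1) * ((m + 1 + i).choose i)
          = ((m : ℚ) + 1 + i) * ((m + i).choose i) := by exact_mod_cast key2 m i
      have e3 : (m : ℚ) * (((m - 1 : ℕ)).choose i) = ((m : ℚ) - i) * (m.choose i) := by
        have := key3 (m - 1) i (by omega)
        rw [hm1'] at this
        have : ((m : ℚ)) * ((m - 1 : ℕ)).choose i = ((m - i : ℕ) : ℚ) * (m.choose i) := by
          exact_mod_cast this
        rw [this, Nat.cast_sub him.le]
      field_simp
      push_cast
      linear_combination (((i:ℚ)+1) * (2*(m:ℚ)+1)) * e1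
        + ((m:ℚ) * ((m + i).choose i : ℚ)) * e3
        - (((m:ℚ)+1) * (m.choose i : ℚ)) * e2
    · have hi : i = m := by omega
      subst hi
      rw [Finset.sum_Ico_succ_top le_rfl, Finset.Ico_self, Finset.sum_empty, zero_add]
      rw [Nat.add_sub_cancel]
      have h1 : ((i + i).choose (2 * i)) = 1 := by
        rw [two_mul, Nat.choose_self]
      have h2 : (i.choose i) = 1 := Nat.choose_self i
      have e : ((2 * i + 1 : ℕ) : ℚ) * ((2 * i).choose i)
          = ((i : ℚ) + 1) * ((i + 1 + i).choose i) := by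
        have hn : (2 * i + 1) * (2 * i).choose i = (i + 1) * (i + 1 + i).choose i := by
          have hs := Nat.add_one_mul_choose_eq (2 * i) i
          have hsym : (2 * i + 1).choose (i + 1) = (2 * i + 1).choose i :=
            Nat.choose_symm_half i
          rw [show i + 1 + i = 2 * i + 1 by omega]
          calc (2 * i + 1) * (2 * i).choose i = (2 * i).succ * (2 * i).choose i := rfl
            _ = (2 * i + 1).choose (i + 1) * (i + 1) := hs
            _ = (i + 1) * (2 * i + 1).choose i := by rw [hsym]; ring
        exact_mod_cast hn
      rw [h1, h2]
      push_cast at e ⊢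
      field_simp
      linear_combination e
end

section
/- For any non-negative integers n > i, the sum over k from i to n-1 of (-1)^k * (2k+1) * C(k+i, 2i) * C(2i, i) equals (-1)^{n-1} * n * C(n-1, i) * C(n+i, i). -/
lemma trin (m i : ℕ) (hi : i ≤ m) :
    (m + i).choose (2 * i) * (2 * i).choose i = (m + i).choose i * m.choose i := by
  have h := Nat.choose_mul (n := m + i) (k := 2 * i) (s := i) (by omega)
  have h1 : m + i - i = m := by omega
  have h2 : 2 * i - i = i := by omega
  rw [h1, h2] at h
  exact h

lemma key_s6 (m i : ℕ) (hi : i ≤ m) :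
    (2 * m + 3) * ((m + 1 + i).choose (2 * i)) * ((2 * i).choose i)
      = (m + 2) * ((m + 1).choose i) * ((m + 2 + i).choose i)
        + (m + 1) * (m.choose i) * ((m + 1 + i).choose i) := by
  have t := trin (m + 1) i (by omega)
  have b : (m + 1) * m.choose i = (m + 1 - i) * (m + 1).choose i := by
    rw [Nat.mul_comm, Nat.choose_mul_succ_eq, Nat.mul_comm]
  have c : (m + 2) * (m + 2 + i).choose i = (m + 2 + i) * (m + 1 + i).choose i := by
    have h := Nat.choose_mul_succ_eq (m + 1 + i) i
    have h1 : m + 1 + i + 1 - i = m + 2 := by omega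
    have h2 : m + 1 + i + 1 = m + 2 + i := by omega
    rw [h1, h2] at h
    exact (Nat.mul_comm _ _).trans (h.symm.trans (Nat.mul_comm _ _))
  calc (2 * m + 3) * ((m + 1 + i).choose (2 * i)) * ((2 * i).choose i)
      = (2 * m + 3) * ((m + 1 + i).choose (2 * i) * (2 * i).choose i) := by ring
    _ = (2 * m + 3) * ((m + 1 + i).choose i * (m + 1).choose i) := by rw [t]
    _ = ((m + 2 + i) + (m + 1 - i)) * ((m + 1 + i).choose i * (m + 1).choose i) := by
        congr 1; omega
    _ = (m + 2 + i) * (m + 1 + i).choose i * (m + 1).choose i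
        + ((m + 1 - i) * (m + 1).choose i) * (m + 1 + i).choose i := by ring
    _ = _ := by rw [← c, ← b]; ring

lemma base (i : ℕ) : (2 * i + 1) * (2 * i).choose i = (i + 1) * (2 * i + 1).choose i := by
  have h := Nat.add_one_mul_choose_eq (2 * i) i
  have hs : (2 * i + 1).choose (i + 1) = (2 * i + 1).choose i := by
    have h2 := Nat.choose_symm (show i + 1 ≤ 2 * i + 1 by omega)
    rw [show 2 * i + 1 - (i + 1) = i by omega] at h2
    exact h2.symm
  rw [h, hs]; ring

theorem stmt6 (n i : ℕ) (h : i < n) :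
    ∑ k ∈ Finset.Ico i n, (-1 : ℤ) ^ k * (2 * (k : ℤ) + 1) * ((k + i).choose (2 * i)) * ((2 * i).choose i)
      = (-1 : ℤ) ^ (n - 1) * n * ((n - 1).choose i) * ((n + i).choose i) := by
  induction n, h using Nat.le_induction with
  | base =>
    rw [show i.succ = i + 1 from rfl, Finset.sum_Ico_succ_top (le_refl i), Finset.Ico_self,
      Finset.sum_empty]
    rw [show i + i = 2 * i by ring, Nat.choose_self, Nat.add_sub_cancel, Nat.choose_self]
    have h2 : ((2 * i + 1) * (2 * i).choose i : ℤ) = (i + 1) * (2 * i + 1).choose i := by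
      exact_mod_cast base i
    rw [show i + 1 + i = 2 * i + 1 by omega]
    push_cast
    linear_combination ((-1 : ℤ) ^ i) * h2
  | succ n hn ih =>
    rw [Finset.sum_Ico_succ_top (by omega), ih]
    obtain ⟨m, rfl⟩ : ∃ m, n = m + 1 := ⟨n - 1, by omega⟩
    have hi : i ≤ m := by omega
    have kz : ((2 * m + 3) * ((m + 1 + i).choose (2 * i)) * ((2 * i).choose i) : ℤ)
        = (m + 2) * ((m + 1).choose i) * ((m + 2 + i).choose i)
          + (m + 1) * (m.choose i) * ((m + 1 + i).choose i) := by exact_mod_cast key_s6 m i hi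
    rw [show m + 1 - 1 = m by omega, show m + 1 + 1 - 1 = m + 1 by omega,
      show m + 1 + 1 + i = m + 2 + i by omega]
    push_cast [pow_succ]
    linear_combination (-(-1 : ℤ) ^ m) * kz
end

section
/- For any prime p >= 5 and m = floor(p/3), and any integer k with 0 <= k <= m, the p-integral rational number (3k)!/(27^k * (k!)^3) is congruent to (-1)^k * C(m,k) * C(m+k,k) modulo p. -/
open Nat

lemma fact3 (k : ℕ) :
    (3 * (k+1)).factorial = (3*k).factorial * ((3*k+1)*(3*k+2)*(3*k+3)) := by
  have h : 3 * (k+1) = (3*k) + 3 := by ring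
  rw [h]
  rw [show (3*k)+3 = ((3*k)+2)+1 from rfl, Nat.factorial_succ,
    show (3*k)+2 = ((3*k)+1)+1 from rfl, Nat.factorial_succ, Nat.factorial_succ]
  ring

lemma key_s8 (p : ℕ) (hp : p.Prime) (h5 : 5 ≤ p) : ∀ k, k ≤ p/3 →
    ((3*k).factorial : ZMod p) * (-1)^k
      = (((p/3).choose k * ((p/3+k).choose k) * 27^k * (k.factorial)^3 : ℕ) : ZMod p) := by
  haveI : Fact p.Prime := ⟨hp⟩
  set m := p / 3 with hm
  -- p ∣ (3m+1)(3m+2)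
  have h3 : ¬ (3 ∣ p) := by
    intro h
    have := (Nat.prime_dvd_prime_iff_eq (by norm_num) hp).mp h
    omega
  have hmod : p % 3 = 1 ∨ p % 3 = 2 := by omega
  have hpdvd : p ∣ (3*m+1) * (3*m+2) := by
    have := Nat.div_add_mod p 3
    have hdm := Nat.div_add_mod p 3
    rcases hmod with h | h
    · have e : 3*m+1 = p := by omega
      rw [e]; exact Dvd.dvd.mul_right dvd_rfl _
    · have e : 3*m+2 = p := by omega
      rw [e]; exact dvd_mul_left _ _
  have hz : ((3*m+1) * (3*m+2) : ZMod p) = 0 := by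
    have := (ZMod.natCast_eq_zero_iff ((3*m+1)*(3*m+2)) p).mpr hpdvd
    push_cast at this ⊢
    exact this
  intro k
  induction k with
  | zero => simp
  | succ k ih =>
    intro hk1
    have hk : k ≤ m := by omega
    have ihh := ih hk
    -- nat identities
    have h1 : m.choose (k+1) * (k+1) = m.choose k * (m - k) := Nat.choose_succ_right_eq m k
    have h2 : (m+k+1) * (m+k).choose k = (m+k+1).choose (k+1) * (k+1) := by
      have := Nat.add_one_mul_choose_eq (m+k) k
      simpa [Nat.succ_eq_add_one] using this
    have h1c : ((m.choose (k+1) : ZMod p)) * ((k:ZMod p)+1)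
        = (m.choose k : ZMod p) * ((m:ZMod p) - (k:ZMod p)) := by
      have := congrArg (fun n : ℕ => (n : ZMod p)) h1
      push_cast [Nat.cast_sub hk] at this
      convert this using 2
    have h2c : ((m+k+1).choose (k+1) : ZMod p) * ((k:ZMod p)+1)
        = ((m+k).choose k : ZMod p) * ((m:ZMod p)+(k:ZMod p)+1) := by
      have := congrArg (fun n : ℕ => (n : ZMod p)) h2
      push_cast at this
      linear_combination -this
    rw [fact3, show m + (k+1) = m+k+1 from by omega]
    push_cast at ihh
    push_cast [pow_succ, Nat.factorial_succ]
    set M := (m : ZMod p)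
    set K := (k : ZMod p)
    set a := (m.choose k : ZMod p)
    set b := ((m+k).choose k : ZMod p)
    set c1 := (m.choose (k+1) : ZMod p)
    set c2 := ((m+k+1).choose (k+1) : ZMod p)
    set F := (k.factorial : ZMod p)
    set P27 := ((27 : ZMod p))^k
    set e := ((-1 : ZMod p))^k
    linear_combination (-((3*K+1)*(3*K+2)*(3*K+3))) * ihh
      + (-c2*(K+1)^2*27*P27*F^3) * h1c
      + (-a*(M-K)*(K+1)*27*P27*F^3) * h2c
      + (-3*a*b*P27*F^3*(K+1)) * hz

theorem stmt8 (p : ℕ) (hp : p.Prime) (h5 : 5 ≤ p) (k : ℕ) (hk : k ≤ p / 3) :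
    ∃ c : ℚ,
      (Nat.factorial (3 * k) : ℚ) / (27 ^ k * (Nat.factorial k : ℚ) ^ 3)
        - (-1 : ℚ) ^ k * ((p / 3).choose k) * ((p / 3 + k).choose k)
        = p * c ∧ ¬ (p ∣ c.den) := by
  haveI : Fact p.Prime := ⟨hp⟩
  set m := p / 3 with hm
  set D : ℕ := 27 ^ k * k.factorial ^ 3 with hD
  have hkp : k < p := lt_of_le_of_lt hk (Nat.div_lt_self (by omega) (by omega))
  have hpD : ¬ p ∣ D := by
    intro h
    rcases (Nat.Prime.dvd_mul hp).mp h with h | h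
    · have h27 : p ∣ 27 := hp.dvd_of_dvd_pow h
      have h3 : p ∣ 3 := hp.dvd_of_dvd_pow (show p ∣ 3^3 by norm_num; exact h27)
      have := Nat.le_of_dvd (by norm_num) h3; omega
    · have hf : p ∣ k.factorial := hp.dvd_of_dvd_pow h
      have := (Nat.Prime.dvd_factorial hp).mp hf; omega
  have hDQ : ((D : ℚ)) ≠ 0 := by
    simp [hD, Nat.factorial_ne_zero]
  have hpQ : (p : ℚ) ≠ 0 := by
    exact_mod_cast hp.ne_zero
  set z : ℤ := ((3*k).factorial : ℤ) - (-1)^k * (m.choose k) * ((m+k).choose k) * D with hzdef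
  -- p divides z
  have hpz : (p : ℤ) ∣ z := by
    rw [← ZMod.intCast_zmod_eq_zero_iff_dvd]
    have hkey := key_s8 p hp h5 k hk
    push_cast at hkey
    have he2 : ((-1 : ZMod p))^(k*2) = 1 := by
      rw [mul_comm, pow_mul]; norm_num
    push_cast [hzdef, hD]
    linear_combination ((-1 : ZMod p))^k * hkey - ((3*k).factorial : ZMod p) * he2
  obtain ⟨q, hq⟩ : ∃ q : ℚ, q = (Nat.factorial (3 * k) : ℚ) / (27 ^ k * (Nat.factorial k : ℚ) ^ 3)
      - (-1 : ℚ) ^ k * ((m).choose k) * ((m + k).choose k) := ⟨_, rfl⟩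
  rw [← hq]
  have hrep : q = ((z : ℤ) : ℚ) / ((D : ℤ) : ℚ) := by
    rw [hq, hzdef]
    push_cast [hD]
    field_simp
  have hqden : ¬ p ∣ q.den := by
    intro hpd
    have hdvd := Rat.den_dvd z (D : ℤ)
    rw [Rat.divInt_eq_div, ← hrep] at hdvd
    have : q.den ∣ D := Int.ofNat_dvd.mp hdvd
    exact hpD (dvd_trans hpd this)
  have hdQ : ((q.den : ℕ) : ℚ) ≠ 0 := by
    exact_mod_cast q.den_nz
  have hqD : q * (((D : ℤ)) : ℚ) = (z : ℚ) := (eq_div_iff (by exact_mod_cast hDQ)).mp hrep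
  have hqden' : q * ((q.den : ℕ) : ℚ) = (q.num : ℚ) :=
    (eq_div_iff hdQ).mp (Rat.num_div_den q).symm
  have hcross : z * (q.den : ℤ) = q.num * (D : ℤ) := by
    have : (z : ℚ) * ((q.den : ℕ) : ℚ) = (q.num : ℚ) * (((D : ℤ)) : ℚ) := by
      rw [← hqD, ← hqden']; ring
    exact_mod_cast this
  have hnum : (p : ℤ) ∣ q.num := by
    have h1 : (p : ℤ) ∣ q.num * (D : ℤ) := hcross ▸ Dvd.dvd.mul_right hpz _
    rcases (Int.Prime.dvd_mul' hp h1) with h | h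
    · exact h
    · exact absurd (Int.ofNat_dvd.mp (by exact_mod_cast h)) hpD
  obtain ⟨n, hn⟩ := hnum
  refine ⟨q / p, ?_, ?_⟩
  · rw [mul_comm, div_mul_cancel₀ _ hpQ]
  · have hc : q / p = ((n : ℤ) : ℚ) / (((q.den : ℕ) : ℤ) : ℚ) := by
      rw [div_eq_div_iff hpQ (by exact_mod_cast hdQ)]
      push_cast
      rw [hqden', hn]
      push_cast
      ring
    intro hpd
    have hdvd := Rat.den_dvd n ((q.den : ℕ) : ℤ)
    rw [Rat.divInt_eq_div, ← hc] at hdvd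
    have : (q / p).den ∣ q.den := Int.ofNat_dvd.mp hdvd
    exact hqden (dvd_trans hpd this)
end

section
/- For any prime p >= 5, H_{floor(p/3)} is congruent to -(3/2) * q_p(3) modulo p, where H_m is the m-th harmonic number and q_p(3) = (3^{p-1}-1)/p. -/
open Finset

lemma sum_refl (p : ℕ) [Fact p.Prime] (a b : ℕ) (hb : b < p) :
    ∑ j ∈ Finset.Ioc a b, ((j : ZMod p))⁻¹
      = ∑ j ∈ Finset.Ioc (p - 1 - b) (p - 1 - a), (-((j : ZMod p))⁻¹) := by
  have hp : 0 < p := (Fact.out : p.Prime).pos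
  refine Finset.sum_nbij' (fun j => p - j) (fun j => p - j) ?_ ?_ ?_ ?_ ?_
  · intro x hx; simp only [Finset.mem_Ioc] at *; omega
  · intro x hx; simp only [Finset.mem_Ioc] at *; omega
  · intro x hx; simp only [Finset.mem_Ioc] at hx; omega
  · intro x hx; simp only [Finset.mem_Ioc] at hx; omega
  · intro x hx
    simp only [Finset.mem_Ioc] at hx
    have h1 : ((p - x : ℕ) : ZMod p) = -(x : ZMod p) := by
      have : (x:ℕ) ≤ p := by omega
      push_cast [Nat.cast_sub this]
      simp
    rw [h1]; rw [inv_neg, neg_neg]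

lemma prod_expand {ι : Type*} [DecidableEq ι] (p : ℤ) (s : Finset ι) (t r : ι → ℤ) :
    (p^2 : ℤ) ∣ (∏ i ∈ s, (p * t i + r i)) -
      ((∏ i ∈ s, r i) + p * ∑ i ∈ s, t i * ∏ j ∈ s.erase i, r j) := by
  induction s using Finset.induction_on with
  | empty => simp
  | @insert a s ha ih =>
    obtain ⟨k, hk⟩ := ih
    rw [Finset.prod_insert ha, Finset.prod_insert ha, Finset.sum_insert ha]
    have he : (insert a s).erase a = s := Finset.erase_insert ha
    have hsum : ∑ i ∈ s, t i * ∏ j ∈ (insert a s).erase i, r j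
        = r a * ∑ i ∈ s, t i * ∏ j ∈ s.erase i, r j := by
      rw [Finset.mul_sum]
      refine Finset.sum_congr rfl fun i hi => ?_
      rw [Finset.erase_insert_of_ne (by rintro rfl; exact ha hi),
        Finset.prod_insert (fun h => ha (Finset.mem_of_mem_erase h))]
      ring
    rw [he, hsum]
    refine ⟨t a * (∑ i ∈ s, t i * ∏ j ∈ s.erase i, r j) + (p * t a + r a) * k, ?_⟩
    linear_combination (p * t a + r a) * hk

lemma prod_reindex (p : ℕ) [Fact p.Prime] (hp3 : ¬ (p ∣ 3)) {M : Type*} [CommMonoid M] (f : ℕ → M) :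
    ∏ j ∈ Finset.Ioc 0 (p-1), f ((3 * j) % p) = ∏ j ∈ Finset.Ioc 0 (p-1), f j := by
  have hp : p.Prime := Fact.out
  have hinj : Set.InjOn (fun j => (3 * j) % p) (Finset.Ioc 0 (p-1) : Set ℕ) := by
    intro a ha b hb hab
    simp only [Finset.coe_Ioc, Set.mem_Ioc] at ha hb
    simp only [] at hab
    have h3 : (3 : ZMod p) ≠ 0 := by
      rw [show (3 : ZMod p) = ((3:ℕ) : ZMod p) by push_cast; ring,
        Ne, ZMod.natCast_eq_zero_iff]
      exact hp3
    have : ((3 * a : ℕ) : ZMod p) = ((3 * b : ℕ) : ZMod p) := by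
      rw [← ZMod.natCast_mod, hab, ZMod.natCast_mod]
    push_cast at this
    have hab2 : ((a:ℕ) : ZMod p) = (b : ZMod p) := mul_left_cancel₀ h3 this
    have := hp.pos
    rwa [ZMod.natCast_eq_natCast_iff', Nat.mod_eq_of_lt (by omega), Nat.mod_eq_of_lt (by omega)] at hab2
  have hmaps : ∀ a ∈ Finset.Ioc 0 (p-1), (3 * a) % p ∈ Finset.Ioc 0 (p-1) := by
    intro a ha
    simp only [Finset.mem_Ioc] at ha ⊢
    have h1 : (3 * a) % p < p := Nat.mod_lt _ hp.pos
    have h2 : (3 * a) % p ≠ 0 := by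
      rw [Ne, ← Nat.dvd_iff_mod_eq_zero]
      intro hdvd
      rcases (Nat.Prime.dvd_mul hp).1 hdvd with h | h
      · exact hp3 h
      · have := Nat.le_of_dvd (by omega) h; omega
    omega
  have himg : Finset.image (fun j => (3*j) % p) (Finset.Ioc 0 (p-1)) = Finset.Ioc 0 (p-1) := by
    apply Finset.eq_of_subset_of_card_le
    · intro x hx
      obtain ⟨a, ha, rfl⟩ := Finset.mem_image.1 hx
      exact hmaps a ha
    · rw [Finset.card_image_of_injOn hinj]
  conv_rhs => rw [← himg]
  rw [Finset.prod_image (fun x hx y hy h => hinj hx hy h)]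

section
variable (p : ℕ) [Fact p.Prime]

lemma main_cong (hp5 : 5 ≤ p) (q : ℤ) (hq : (3:ℤ)^(p-1) - 1 = p * q) :
    2 * (∑ j ∈ Finset.Ioc 0 (p/3), ((j : ZMod p))⁻¹) + 3 * (q : ZMod p) = 0 := by
  have hp : p.Prime := Fact.out
  have hp3 : ¬ (p ∣ 3) := fun h => by have := Nat.le_of_dvd (by norm_num) h; omega
  have h3p : ¬ (3 ∣ p) := by
    intro h
    rcases (Nat.Prime.eq_one_or_self_of_dvd hp 3 h) with h' | h' <;> omega
  set s : Finset ℕ := Finset.Ioc 0 (p-1) with hs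
  set t : ℕ → ℕ := fun j => (3 * j) / p with ht
  set r : ℕ → ℤ := fun j => (((3 * j) % p : ℕ) : ℤ) with hr
  -- step 1: integer congruence
  set W : ℤ := ∏ j ∈ s, (j : ℤ) with hW
  set Q : ℤ := ∑ j ∈ s, (t j : ℤ) * ∏ i ∈ s.erase j, r i with hQ
  have h1 : ((p:ℤ))^2 ∣ (∏ j ∈ s, ((p:ℤ) * t j + r j)) - ((∏ j ∈ s, r j) + p * Q) :=
    prod_expand (p:ℤ) s _ _
  have h2 : ∀ j ∈ s, (p:ℤ) * t j + r j = 3 * (j:ℤ) := by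
    intro j _
    have := Nat.div_add_mod (3*j) p
    push_cast [ht, hr]
    push_cast at this
    linarith [this]
  have h3 : ∏ j ∈ s, ((p:ℤ) * t j + r j) = 3^(p-1) * W := by
    rw [Finset.prod_congr rfl h2, Finset.prod_mul_distrib, Finset.prod_const, hW,
      Nat.card_Ioc, Nat.sub_zero]
  have h4 : ∏ j ∈ s, r j = W := prod_reindex p hp3 (fun n => (n : ℤ))
  rw [h3, h4] at h1
  have h5 : (p:ℤ) ∣ q * W - Q := by
    have hrw : (3:ℤ)^(p-1) * W - (W + p * Q) = p * (q * W - Q) := by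
      have : (3:ℤ)^(p-1) = p * q + 1 := by linarith [hq]
      rw [this]; ring
    rw [hrw, pow_two] at h1
    exact (mul_dvd_mul_iff_left (by exact_mod_cast hp.ne_zero : (p:ℤ) ≠ 0)).1 h1
  -- step 2: pass to ZMod p
  have h6 : (q : ZMod p) * (W : ZMod p) = (Q : ZMod p) := by
    have := (ZMod.intCast_zmod_eq_zero_iff_dvd _ p).2 h5
    push_cast at this
    linear_combination this
  -- ZMod computations
  have h3K : (3 : ZMod p) ≠ 0 := by
    rw [show (3 : ZMod p) = ((3:ℕ) : ZMod p) by push_cast; ring,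
      Ne, ZMod.natCast_eq_zero_iff]
    exact hp3
  have jnz : ∀ j ∈ s, ((j:ℕ) : ZMod p) ≠ 0 := by
    intro j hj
    simp only [hs, Finset.mem_Ioc] at hj
    rw [Ne, ZMod.natCast_eq_zero_iff]
    intro h
    have := Nat.le_of_dvd (by omega) h
    omega
  set Wb : ZMod p := ∏ j ∈ s, ((j : ZMod p)) with hWb
  have hWbne : Wb ≠ 0 := Finset.prod_ne_zero_iff.2 jnz
  have hWK : ((W : ℤ) : ZMod p) = Wb := by push_cast [hW]; rfl
  have hrK : ∀ i : ℕ, ((r i : ℤ) : ZMod p) = 3 * (i : ZMod p) := by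
    intro i
    rw [hr]
    push_cast [ZMod.natCast_mod]
    ring
  have hprodr : ∏ i ∈ s, ((r i : ℤ) : ZMod p) = Wb := by
    calc ∏ i ∈ s, ((r i : ℤ) : ZMod p) = ∏ i ∈ s, (3 * (i : ZMod p)) :=
          Finset.prod_congr rfl (fun i _ => hrK i)
      _ = 3 ^ (p-1) * Wb := by
          rw [Finset.prod_mul_distrib, Finset.prod_const, hs, Nat.card_Ioc, Nat.sub_zero]
      _ = Wb := by rw [ZMod.pow_card_sub_one_eq_one h3K, one_mul]
  have herase : ∀ j ∈ s, ∏ i ∈ s.erase j, ((r i : ℤ) : ZMod p) = Wb * (3 * (j : ZMod p))⁻¹ := by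
    intro j hj
    have hmul := Finset.mul_prod_erase s (fun i => ((r i : ℤ) : ZMod p)) hj
    have hne : ((r j : ℤ) : ZMod p) ≠ 0 := by
      rw [hrK]; exact mul_ne_zero h3K (jnz j hj)
    rw [hprodr] at hmul
    rw [eq_mul_inv_iff_mul_eq₀ (by rw [← hrK j]; exact hne), ← hrK j]
    linear_combination hmul
  have hQK : ((Q : ℤ) : ZMod p) = Wb * ∑ j ∈ s, (t j : ZMod p) * (3 * (j : ZMod p))⁻¹ := by
    rw [hQ]
    push_cast
    rw [Finset.mul_sum]
    refine Finset.sum_congr rfl fun j hj => ?_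
    rw [herase j hj]
    ring
  set T : ZMod p := ∑ j ∈ s, (t j : ZMod p) * ((j : ZMod p))⁻¹ with hT
  have h7 : (q : ZMod p) = 3⁻¹ * T := by
    have hterm : ∀ j : ℕ, (t j : ZMod p) * (3 * (j:ZMod p))⁻¹
        = 3⁻¹ * ((t j : ZMod p) * ((j:ZMod p))⁻¹) := by
      intro j; rw [mul_inv]; ring
    have : (q:ZMod p) * Wb = Wb * (3⁻¹ * T) := by
      rw [← hWK, h6, hQK, Finset.sum_congr rfl (fun j _ => hterm j), ← Finset.mul_sum, ← hT, hWK]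
    have := mul_right_cancel₀ hWbne (by rw [this, mul_comm] : (q:ZMod p) * Wb = (3⁻¹ * T) * Wb)
    exact this
  -- step 3: characterize t and split sums
  have hpm : p % 3 ≠ 0 := fun h => h3p (Nat.dvd_of_mod_eq_zero h)
  have tchar : ∀ j ∈ s, t j = (if p/3 < j then 1 else 0) + (if 2*p/3 < j then 1 else 0) := by
    intro j hj
    simp only [hs, Finset.mem_Ioc] at hj
    have hd := Nat.div_add_mod (3*j) p
    have hmod : (3*j) % p < p := Nat.mod_lt _ hp.pos
    have hlt : 3*j/p < 3 := Nat.div_lt_of_lt_mul (by omega)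
    simp only [ht]
    generalize hgen : 3*j/p = a at hd hlt ⊢
    interval_cases a <;> split_ifs <;> omega
  set Hb : ZMod p := ∑ j ∈ Finset.Ioc 0 (p/3), ((j : ZMod p))⁻¹ with hHb
  set S0 : ZMod p := ∑ j ∈ Finset.Ioc 0 (p-1), ((j : ZMod p))⁻¹ with hS0def
  have hS0 : S0 = 0 := by
    have hrefl := sum_refl p 0 (p-1) (by omega)
    rw [Nat.sub_self, Nat.sub_zero, Finset.sum_neg_distrib] at hrefl
    have h2K : (2 : ZMod p) ≠ 0 := by
      rw [show (2 : ZMod p) = ((2:ℕ) : ZMod p) by push_cast; ring,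
        Ne, ZMod.natCast_eq_zero_iff]
      intro h; have := Nat.le_of_dvd (by norm_num) h; omega
    have h2S : (2:ZMod p) * S0 = 0 := by
      rw [two_mul]
      rw [hS0def]
      linear_combination hrefl
    rcases mul_eq_zero.1 h2S with h | h
    · exact absurd h h2K
    · exact h
  have hsplit : (∑ j ∈ Finset.Ioc 0 (p/3), ((j:ZMod p))⁻¹) + ∑ j ∈ Finset.Ioc (p/3) (p-1), ((j:ZMod p))⁻¹ = S0 :=
    Finset.sum_Ioc_consecutive _ (by omega) (by omega)
  have hA1 : ∑ j ∈ Finset.Ioc (p/3) (p-1), ((j:ZMod p))⁻¹ = S0 - Hb := by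
    rw [← hsplit, hHb]; ring
  have hA2 : ∑ j ∈ Finset.Ioc (2*p/3) (p-1), ((j:ZMod p))⁻¹ = -Hb := by
    have hrefl := sum_refl p (2*p/3) (p-1) (by omega)
    have he : p - 1 - (p-1) = 0 := by omega
    have he2 : p - 1 - 2*p/3 = p/3 := by omega
    rw [he, he2, Finset.sum_neg_distrib] at hrefl
    rw [hrefl, hHb]
  have hTval : T = (S0 - Hb) + -Hb := by
    rw [← hA1, ← hA2, hT]
    have hterm2 : ∀ j ∈ s, ((t j : ZMod p)) * ((j:ZMod p))⁻¹
        = (if p/3 < j then ((j:ZMod p))⁻¹ else 0) + (if 2*p/3 < j then ((j:ZMod p))⁻¹ else 0) := by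
      intro j hj
      rw [tchar j hj]
      push_cast
      split_ifs <;> ring
    rw [Finset.sum_congr rfl hterm2, Finset.sum_add_distrib]
    congr 1
    · rw [← Finset.sum_filter]
      congr 1
      ext x
      simp only [hs, Finset.mem_filter, Finset.mem_Ioc]
      omega
    · rw [← Finset.sum_filter]
      congr 1
      ext x
      simp only [hs, Finset.mem_filter, Finset.mem_Ioc]
      omega
  have h33 : (3:ZMod p) * 3⁻¹ = 1 := mul_inv_cancel₀ h3K
  rw [h7, hTval, hS0]
  calc (2:ZMod p) * Hb + 3 * (3⁻¹ * ((0 - Hb) + -Hb)) 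
      = 2 * Hb + (3 * 3⁻¹) * ((0 - Hb) + -Hb) := by ring
    _ = 0 := by rw [h33]; ring


end

theorem stmt9 (p : ℕ) (hp : p.Prime) (h5 : 5 ≤ p) :
    ∃ c : ℚ,
      H (p / 3) - (-(3 / 2) * (((3 : ℚ) ^ (p - 1) - 1) / p)) = p * c ∧ ¬ (p ∣ c.den) := by
  haveI : Fact p.Prime := ⟨hp⟩
  have hp0 : (0:ℕ) < p := hp.pos
  set m : ℕ := p / 3 with hm
  have hm1 : 1 ≤ m := by omega
  have hmp : m < p := by omega
  set F : ℕ := m.factorial with hF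
  have h3K : (3 : ZMod p) ≠ 0 := by
    rw [show (3 : ZMod p) = ((3:ℕ) : ZMod p) by push_cast; ring,
      Ne, ZMod.natCast_eq_zero_iff]
    intro h; have := Nat.le_of_dvd (by norm_num) h; omega
  -- q exists
  have hdvd31 : (p:ℤ) ∣ (3:ℤ)^(p-1) - 1 := by
    rw [← ZMod.intCast_zmod_eq_zero_iff_dvd]
    push_cast
    rw [ZMod.pow_card_sub_one_eq_one h3K]
    ring
  obtain ⟨q, hq⟩ := hdvd31
  have main := main_cong p h5 q hq
  -- integer N and A
  set N : ℕ := ∑ j ∈ Finset.range m, F/(j+1) with hN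
  have hdvdF : ∀ j ∈ Finset.range m, (j+1) ∣ F :=
    fun j hj => Nat.dvd_factorial (by omega) (by simpa using Finset.mem_range.1 hj)
  have hNQ : (N : ℚ) = F * H m := by
    rw [hN, H]
    push_cast
    rw [Finset.mul_sum]
    refine Finset.sum_congr rfl fun j hj => ?_
    rw [Nat.cast_div (hdvdF j hj) (by positivity)]
    push_cast
    field_simp
  set A : ℤ := 2 * (N:ℤ) + 3 * F * q with hA
  -- A ≡ 0 mod p
  have hApK : (A : ZMod p) = 0 := by
    have hNK : ((N:ℕ) : ZMod p) = (F : ZMod p) * ∑ j ∈ Finset.Ioc 0 m, ((j : ZMod p))⁻¹ := by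
      have hIoc : ∑ j ∈ Finset.Ioc 0 m, ((j : ZMod p))⁻¹
          = ∑ j ∈ Finset.range m, (((j+1 : ℕ) : ZMod p))⁻¹ := by
        refine Finset.sum_nbij' (fun j => j - 1) (fun j => j + 1) ?_ ?_ ?_ ?_ ?_
        · intro a ha; simp only [Finset.mem_Ioc] at ha
          refine Finset.mem_range.2 ?_; show a - 1 < m; omega
        · intro a ha; simp only [Finset.mem_range] at ha
          refine Finset.mem_Ioc.2 ?_
          constructor
          · show 0 < a + 1; omega
          · show a + 1 ≤ m; omega
        · intro a ha; simp only [Finset.mem_Ioc] at ha; show a - 1 + 1 = a; omega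
        · intro a ha; simp only [Finset.mem_range] at ha; show a + 1 - 1 = a; omega
        · intro a ha
          simp only [Finset.mem_Ioc] at ha
          have h' : a - 1 + 1 = a := by omega
          show ((a : ZMod p))⁻¹ = (((a - 1 + 1 : ℕ) : ZMod p))⁻¹
          rw [h']
      rw [hN, hIoc]
      push_cast
      rw [Finset.mul_sum]
      refine Finset.sum_congr rfl fun j hj => ?_
      have hj' := Finset.mem_range.1 hj
      have hne : ((j+1 : ℕ) : ZMod p) ≠ 0 := by
        rw [Ne, ZMod.natCast_eq_zero_iff]
        intro h; have := Nat.le_of_dvd (by omega) h; omega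
      have hmul : ((j+1:ℕ) : ZMod p) * ((F/(j+1) : ℕ) : ZMod p) = (F : ZMod p) := by
        rw [← Nat.cast_mul, Nat.mul_div_cancel' (hdvdF j hj)]
      have hx : ((F/(j+1):ℕ) : ZMod p) = (((j+1:ℕ)) : ZMod p)⁻¹ * (F:ZMod p) := by
        rw [← hmul, ← mul_assoc, inv_mul_cancel₀ hne, one_mul]
      rw [hx]
      push_cast
      ring
    rw [hA]
    push_cast
    rw [hNK]
    linear_combination ((F:ℕ) : ZMod p) * main
  have hpA : (p:ℤ) ∣ A := (ZMod.intCast_zmod_eq_zero_iff_dvd A p).1 hApK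
  obtain ⟨B, hB⟩ := hpA
  refine ⟨(B : ℚ) / ((2 * F : ℕ) : ℚ), ?_, ?_⟩
  · -- the equation
    have hFQ : ((F:ℕ) : ℚ) ≠ 0 := Nat.cast_ne_zero.2 (by have := Nat.factorial_pos m; omega)
    have hpQ : ((p:ℕ) : ℚ) ≠ 0 := Nat.cast_ne_zero.2 (by omega)
    have hq' : (3:ℚ)^(p-1) - 1 = p * q := by exact_mod_cast congrArg (Int.cast : ℤ → ℚ) hq
    have hBQ : ((A:ℤ) : ℚ) = p * B := by exact_mod_cast congrArg (Int.cast : ℤ → ℚ) hB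
    have hAQ : ((A:ℤ) : ℚ) = 2 * N + 3 * F * q := by rw [hA]; push_cast; ring
    have h2F : ((2*F:ℕ):ℚ) ≠ 0 := Nat.cast_ne_zero.2 (by have := Nat.factorial_pos m; omega)
    have key : (p:ℚ) * B = 2*F*(H m) + 3*F*(q:ℚ) := by
      linear_combination -hBQ + hAQ + 2*hNQ
    rw [hq', show ((p:ℚ) * (q:ℚ) / (p:ℚ)) = (q:ℚ) from by field_simp,
      ← mul_div_assoc, key, eq_div_iff h2F]
    push_cast
    ring
  · -- denominator
    intro hden
    have hc : ((B : ℚ) / ((2 * F : ℕ) : ℚ)) = Rat.divInt B (2 * F : ℕ) := by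
      rw [Rat.divInt_eq_div]
      push_cast
      ring
    have hdvd : (((B : ℚ) / ((2 * F : ℕ) : ℚ)).den : ℤ) ∣ ((2 * F : ℕ) : ℤ) := by
      rw [hc]; exact Rat.den_dvd _ _
    have : p ∣ 2 * F := by exact_mod_cast dvd_trans (Int.natCast_dvd_natCast.2 hden) hdvd
    rcases (Nat.Prime.dvd_mul hp).1 this with h | h
    · have := Nat.le_of_dvd (by norm_num) h; omega
    · have := (Nat.Prime.dvd_factorial hp).1 h
      omega
end

section
/- For any non-negative integer n, the Almkvist-Zudilin number gamma_n = sum_{j=0}^{n} (-1)^{n-j} * 3^{n-3j} * (3j)!/(j!)^3 * C(n,3j) * C(n+j,j) equals sum_{i=0}^{n} C(2i,i)^2 * C(4i,2i) * C(n+3i,4i) * (-3)^{3(n-i)}. -/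
open Finset

namespace AZ11

def fL (n j : ℕ) : ℚ :=
  (-1) ^ (n + j) * (3 : ℚ) ^ ((n : ℤ) - 3 * j) * (Nat.factorial (3 * j) : ℚ)
    / (Nat.factorial j : ℚ) ^ 3 * (n.choose (3 * j)) * ((n + j).choose j)

def fR (n i : ℕ) : ℚ :=
  (((2 * i).choose i : ℚ)) ^ 2 * ((4 * i).choose (2 * i)) * ((n + 3 * i).choose (4 * i))
    * (-27 : ℚ) ^ ((n : ℤ) - i)

def gL (n k : ℕ) : ℚ :=
  if 3 * k ≤ n + 2 then
    -324 * (4 * n + 5) * (-1) ^ (n + k) * (3 : ℚ) ^ ((n : ℤ) - 3 * k) * (k : ℚ) ^ 4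
      * (Nat.factorial (n + k) : ℚ)
      / ((Nat.factorial k : ℚ) ^ 4 * (Nat.factorial (n + 2 - 3 * k) : ℚ))
  else 0

def gR (n k : ℕ) : ℚ :=
  if k ≤ n + 2 then
    -2916 * (4 * n + 7) * (-27 : ℚ) ^ ((n : ℤ) - k) * (k : ℚ) ^ 4
      * (Nat.factorial (n + 3 * k) : ℚ)
      / ((Nat.factorial k : ℚ) ^ 4 * (Nat.factorial (n + 2 - k) : ℚ))
  else 0

def SL (n : ℕ) : ℚ := ∑ j ∈ range (n + 1), fL n j

def SR (n : ℕ) : ℚ := ∑ i ∈ range (n + 1), fR n i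

lemma fac_ne (a : ℕ) : (Nat.factorial a : ℚ) ≠ 0 :=
  Nat.cast_ne_zero.2 (Nat.factorial_ne_zero a)

lemma sign4 (k c : ℕ) : (-1 : ℚ) ^ (4 * k + c) = (-1) ^ c := by
  rw [pow_add, pow_mul]; norm_num

lemma fL_zero {n j : ℕ} (h : n < 3 * j) : fL n j = 0 := by
  simp [fL, Nat.choose_eq_zero_of_lt h]

lemma fR_zero {n k : ℕ} (h : n < k) : fR n k = 0 := by
  have : n + 3 * k < 4 * k := by omega
  simp [fR, Nat.choose_eq_zero_of_lt this]

lemma fL_gen (k m : ℕ) :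
    fL (3 * k + m) k
      = (-1 : ℚ) ^ m * 3 ^ m * (Nat.factorial (4 * k + m) : ℚ)
        / ((Nat.factorial k : ℚ) ^ 4 * (Nat.factorial m : ℚ)) := by
  unfold fL
  rw [Nat.cast_choose ℚ (show 3 * k ≤ 3 * k + m by omega),
      Nat.cast_choose ℚ (show k ≤ 3 * k + m + k by omega),
      show 3 * k + m - 3 * k = m by omega,
      show 3 * k + m + k - k = 3 * k + m by omega,
      show 3 * k + m + k = 4 * k + m by omega, sign4,
      show ((3 * k + m : ℕ) : ℤ) - 3 * (k : ℤ) = (m : ℤ) by push_cast; ring,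
      zpow_natCast]
  field_simp [fac_ne]

lemma fR_gen (k m : ℕ) :
    fR (k + m) k
      = (-27 : ℚ) ^ m * (Nat.factorial (4 * k + m) : ℚ)
        / ((Nat.factorial k : ℚ) ^ 4 * (Nat.factorial m : ℚ)) := by
  unfold fR
  rw [Nat.cast_choose ℚ (show k ≤ 2 * k by omega),
      Nat.cast_choose ℚ (show 2 * k ≤ 4 * k by omega),
      Nat.cast_choose ℚ (show 4 * k ≤ k + m + 3 * k by omega),
      show 2 * k - k = k by omega, show 4 * k - 2 * k = 2 * k by omega,
      show k + m + 3 * k - 4 * k = m by omega,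
      show k + m + 3 * k = 4 * k + m by omega,
      show ((k + m : ℕ) : ℤ) - (k : ℤ) = (m : ℤ) by push_cast; ring,
      zpow_natCast]
  field_simp [fac_ne]

lemma keyL (n k : ℕ) :
    ((n : ℚ) + 2) ^ 3 * fL (n + 2) k
      + (2 * (n : ℚ) + 3) * (7 * (n : ℚ) ^ 2 + 21 * n + 17) * fL (n + 1) k
      + 81 * ((n : ℚ) + 1) ^ 3 * fL n k
      = gL n (k + 1) - gL n k := by
  rcases le_or_gt (3 * k) n with h | h
  · obtain ⟨m, rfl⟩ : ∃ m, n = 3 * k + m := ⟨n - 3 * k, by omega⟩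
    cases m with
    | zero =>
      rw [show 3 * k + 0 + 2 = 3 * k + 2 by omega, show 3 * k + 0 + 1 = 3 * k + 1 by omega,
          fL_gen k 2, fL_gen k 1]
      have hf0 : fL (3 * k + 0) k
          = (-1 : ℚ) ^ 0 * 3 ^ 0 * (Nat.factorial (4 * k + 0) : ℚ)
            / ((Nat.factorial k : ℚ) ^ 4 * (Nat.factorial 0 : ℚ)) := fL_gen k 0
      rw [hf0]
      unfold gL
      rw [if_neg (by omega), if_pos (show 3 * k ≤ 3 * k + 0 + 2 by omega),
          show 3 * k + 0 + k = 4 * k + 0 by omega,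
          show 3 * k + 0 + 2 - 3 * k = 2 by omega, sign4,
          show ((3 * k + 0 : ℕ) : ℤ) - 3 * (k : ℤ) = ((0 : ℕ) : ℤ) by push_cast; ring,
          zpow_natCast]
      have e2 : (Nat.factorial (4 * k + 2) : ℚ)
          = (4 * (k : ℚ) + 2) * (Nat.factorial (4 * k + 1) : ℚ) := by
        rw [show 4 * k + 2 = (4 * k + 1) + 1 by omega, Nat.factorial_succ]; push_cast; ring
      have e1 : (Nat.factorial (4 * k + 1) : ℚ)
          = (4 * (k : ℚ) + 1) * (Nat.factorial (4 * k + 0) : ℚ) := by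
        rw [show 4 * k + 1 = (4 * k + 0) + 1 by omega, Nat.factorial_succ]; push_cast; ring
      rw [e2, e1]
      field_simp [fac_ne]
      push_cast
      ring
    | succ m =>
      rw [show 3 * k + (m + 1) + 2 = 3 * k + (m + 3) by omega,
          show 3 * k + (m + 1) + 1 = 3 * k + (m + 2) by omega,
          fL_gen k (m + 3), fL_gen k (m + 2), fL_gen k (m + 1)]
      unfold gL
      rw [if_pos (show 3 * (k + 1) ≤ 3 * k + (m + 1) + 2 by omega),
          if_pos (show 3 * k ≤ 3 * k + (m + 1) + 2 by omega),
          show 3 * k + (m + 1) + (k + 1) = 4 * k + (m + 2) by omega,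
          show 3 * k + (m + 1) + 2 - 3 * (k + 1) = m by omega,
          show 3 * k + (m + 1) + k = 4 * k + (m + 1) by omega,
          show 3 * k + (m + 1) + 2 - 3 * k = m + 3 by omega,
          sign4, sign4,
          show ((3 * k + (m + 1) : ℕ) : ℤ) - 3 * ((k + 1 : ℕ) : ℤ) = (m : ℤ) - 2 by
            push_cast; ring,
          show ((3 * k + (m + 1) : ℕ) : ℤ) - 3 * (k : ℤ) = ((m + 1 : ℕ) : ℤ) by
            push_cast; ring,
          zpow_sub₀ (show (3 : ℚ) ≠ 0 by norm_num), zpow_natCast, zpow_natCast,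
          show (3 : ℚ) ^ (2 : ℤ) = 9 by norm_num]
      have e3 : (Nat.factorial (4 * k + (m + 3)) : ℚ)
          = (4 * (k : ℚ) + m + 3) * (Nat.factorial (4 * k + (m + 2)) : ℚ) := by
        rw [show 4 * k + (m + 3) = (4 * k + (m + 2)) + 1 by omega, Nat.factorial_succ]
        push_cast; ring
      have e2 : (Nat.factorial (4 * k + (m + 2)) : ℚ)
          = (4 * (k : ℚ) + m + 2) * (Nat.factorial (4 * k + (m + 1)) : ℚ) := by
        rw [show 4 * k + (m + 2) = (4 * k + (m + 1)) + 1 by omega, Nat.factorial_succ]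
        push_cast; ring
      have f3 : (Nat.factorial (m + 3) : ℚ) = ((m : ℚ) + 3) * (Nat.factorial (m + 2) : ℚ) := by
        rw [show m + 3 = (m + 2) + 1 by omega, Nat.factorial_succ]; push_cast; ring
      have f2 : (Nat.factorial (m + 2) : ℚ) = ((m : ℚ) + 2) * (Nat.factorial (m + 1) : ℚ) := by
        rw [show m + 2 = (m + 1) + 1 by omega, Nat.factorial_succ]; push_cast; ring
      have f1 : (Nat.factorial (m + 1) : ℚ) = ((m : ℚ) + 1) * (Nat.factorial m : ℚ) := by
        rw [Nat.factorial_succ]; push_cast; ring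
      have g1 : (Nat.factorial (k + 1) : ℚ) = ((k : ℚ) + 1) * (Nat.factorial k : ℚ) := by
        rw [Nat.factorial_succ]; push_cast; ring
      rw [e3, e2, f3, f2, f1, g1]
      have hm1 : ((m : ℚ) + 1) ≠ 0 := by positivity
      have hm2 : ((m : ℚ) + 2) ≠ 0 := by positivity
      have hm3 : ((m : ℚ) + 3) ≠ 0 := by positivity
      have hk1 : ((k : ℚ) + 1) ≠ 0 := by positivity
      field_simp [fac_ne]
      push_cast
      ring
  · rcases (show 3 * k = n + 1 ∨ 3 * k = n + 2 ∨ n + 2 < 3 * k by omega) with h1 | h2 | h3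
    · -- 3k = n+1
      obtain ⟨j, rfl, rfl⟩ : ∃ j, k = j + 1 ∧ n = 3 * j + 2 := ⟨k - 1, by omega, by omega⟩
      have hf1 : fL (3 * j + 2 + 1) (j + 1)
          = (-1 : ℚ) ^ 0 * 3 ^ 0 * (Nat.factorial (4 * j + 4) : ℚ)
            / ((Nat.factorial (j + 1) : ℚ) ^ 4 * (Nat.factorial 0 : ℚ)) := by
        have := fL_gen (j + 1) 0
        rw [show 3 * (j + 1) + 0 = 3 * j + 2 + 1 by omega,
            show 4 * (j + 1) + 0 = 4 * j + 4 by omega] at this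
        exact this
      have hf2 : fL (3 * j + 2 + 2) (j + 1)
          = (-1 : ℚ) ^ 1 * 3 ^ 1 * (Nat.factorial (4 * j + 5) : ℚ)
            / ((Nat.factorial (j + 1) : ℚ) ^ 4 * (Nat.factorial 1 : ℚ)) := by
        have := fL_gen (j + 1) 1
        rw [show 3 * (j + 1) + 1 = 3 * j + 2 + 2 by omega,
            show 4 * (j + 1) + 1 = 4 * j + 5 by omega] at this
        exact this
      rw [fL_zero (show 3 * j + 2 < 3 * (j + 1) by omega), hf1, hf2]
      unfold gL
      rw [if_neg (by omega), if_pos (show 3 * (j + 1) ≤ 3 * j + 2 + 2 by omega),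
          show 3 * j + 2 + (j + 1) = 4 * j + 3 by omega,
          show 3 * j + 2 + 2 - 3 * (j + 1) = 1 by omega, sign4,
          show ((3 * j + 2 : ℕ) : ℤ) - 3 * ((j + 1 : ℕ) : ℤ) = (-1 : ℤ) by push_cast; ring,
          show (3 : ℚ) ^ (-1 : ℤ) = 1 / 3 by norm_num]
      have e5 : (Nat.factorial (4 * j + 5) : ℚ)
          = (4 * (j : ℚ) + 5) * (Nat.factorial (4 * j + 4) : ℚ) := by
        rw [show 4 * j + 5 = (4 * j + 4) + 1 by omega, Nat.factorial_succ]; push_cast; ring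
      have e4 : (Nat.factorial (4 * j + 4) : ℚ)
          = (4 * (j : ℚ) + 4) * (Nat.factorial (4 * j + 3) : ℚ) := by
        rw [show 4 * j + 4 = (4 * j + 3) + 1 by omega, Nat.factorial_succ]; push_cast; ring
      rw [e5, e4, Nat.factorial_zero, Nat.factorial_one]
      field_simp [fac_ne]
      push_cast
      ring
    · -- 3k = n+2
      obtain ⟨j, rfl, rfl⟩ : ∃ j, k = j + 1 ∧ n = 3 * j + 1 := ⟨k - 1, by omega, by omega⟩
      have hf2 : fL (3 * j + 1 + 2) (j + 1)
          = (-1 : ℚ) ^ 0 * 3 ^ 0 * (Nat.factorial (4 * j + 4) : ℚ)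
            / ((Nat.factorial (j + 1) : ℚ) ^ 4 * (Nat.factorial 0 : ℚ)) := by
        have := fL_gen (j + 1) 0
        rw [show 3 * (j + 1) + 0 = 3 * j + 1 + 2 by omega,
            show 4 * (j + 1) + 0 = 4 * j + 4 by omega] at this
        exact this
      rw [fL_zero (show 3 * j + 1 < 3 * (j + 1) by omega),
          fL_zero (show 3 * j + 1 + 1 < 3 * (j + 1) by omega), hf2]
      unfold gL
      rw [if_neg (by omega), if_pos (show 3 * (j + 1) ≤ 3 * j + 1 + 2 by omega),
          show 3 * j + 1 + (j + 1) = 4 * j + 2 by omega,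
          show 3 * j + 1 + 2 - 3 * (j + 1) = 0 by omega, sign4,
          show ((3 * j + 1 : ℕ) : ℤ) - 3 * ((j + 1 : ℕ) : ℤ) = (-2 : ℤ) by push_cast; ring,
          show (3 : ℚ) ^ (-2 : ℤ) = 1 / 9 by norm_num]
      have e4 : (Nat.factorial (4 * j + 4) : ℚ)
          = (4 * (j : ℚ) + 4) * (Nat.factorial (4 * j + 3) : ℚ) := by
        rw [show 4 * j + 4 = (4 * j + 3) + 1 by omega, Nat.factorial_succ]; push_cast; ring
      have e3 : (Nat.factorial (4 * j + 3) : ℚ)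
          = (4 * (j : ℚ) + 3) * (Nat.factorial (4 * j + 2) : ℚ) := by
        rw [show 4 * j + 3 = (4 * j + 2) + 1 by omega, Nat.factorial_succ]; push_cast; ring
      rw [e4, e3, Nat.factorial_zero]
      field_simp [fac_ne]
      push_cast
      ring
    · rw [fL_zero (show n < 3 * k by omega), fL_zero (show n + 1 < 3 * k by omega),
          fL_zero (show n + 2 < 3 * k by omega)]
      unfold gL
      rw [if_neg (by omega), if_neg (by omega)]
      ring


lemma keyR (n k : ℕ) :
    ((n : ℚ) + 2) ^ 3 * fR (n + 2) k
      + (2 * (n : ℚ) + 3) * (7 * (n : ℚ) ^ 2 + 21 * n + 17) * fR (n + 1) k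
      + 81 * ((n : ℚ) + 1) ^ 3 * fR n k
      = gR n (k + 1) - gR n k := by
  rcases le_or_gt k n with h | h
  · -- generic case
    obtain ⟨m, rfl⟩ : ∃ m, n = k + m := ⟨n - k, by omega⟩
    rw [show k + m + 2 = k + (m + 2) by omega, show k + m + 1 = k + (m + 1) by omega,
        fR_gen k (m + 2), fR_gen k (m + 1), fR_gen k m]
    unfold gR
    rw [if_pos (show k + 1 ≤ k + m + 2 by omega), if_pos (show k ≤ k + m + 2 by omega),
        show k + m + 3 * (k + 1) = 4 * k + (m + 3) by omega,
        show k + m + 2 - (k + 1) = m + 1 by omega,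
        show k + m + 3 * k = 4 * k + m by omega,
        show k + m + 2 - k = m + 2 by omega,
        show ((k + m : ℕ) : ℤ) - ((k + 1 : ℕ) : ℤ) = (m : ℤ) - 1 by push_cast; ring,
        show ((k + m : ℕ) : ℤ) - (k : ℤ) = (m : ℤ) by push_cast; ring,
        zpow_sub₀ (show (-27 : ℚ) ≠ 0 by norm_num), zpow_natCast, zpow_one]
    have e3 : (Nat.factorial (4 * k + (m + 3)) : ℚ)
        = (4 * (k : ℚ) + m + 3) * (Nat.factorial (4 * k + (m + 2)) : ℚ) := by
      rw [show 4 * k + (m + 3) = (4 * k + (m + 2)) + 1 by omega, Nat.factorial_succ]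
      push_cast; ring
    have e2 : (Nat.factorial (4 * k + (m + 2)) : ℚ)
        = (4 * (k : ℚ) + m + 2) * (Nat.factorial (4 * k + (m + 1)) : ℚ) := by
      rw [show 4 * k + (m + 2) = (4 * k + (m + 1)) + 1 by omega, Nat.factorial_succ]
      push_cast; ring
    have e1 : (Nat.factorial (4 * k + (m + 1)) : ℚ)
        = (4 * (k : ℚ) + m + 1) * (Nat.factorial (4 * k + m) : ℚ) := by
      rw [show 4 * k + (m + 1) = (4 * k + m) + 1 by omega, Nat.factorial_succ]
      push_cast; ring
    have f2 : (Nat.factorial (m + 2) : ℚ) = ((m : ℚ) + 2) * (Nat.factorial (m + 1) : ℚ) := by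
      rw [show m + 2 = (m + 1) + 1 by omega, Nat.factorial_succ]; push_cast; ring
    have f1 : (Nat.factorial (m + 1) : ℚ) = ((m : ℚ) + 1) * (Nat.factorial m : ℚ) := by
      rw [Nat.factorial_succ]; push_cast; ring
    have g1 : (Nat.factorial (k + 1) : ℚ) = ((k : ℚ) + 1) * (Nat.factorial k : ℚ) := by
      rw [Nat.factorial_succ]; push_cast; ring
    rw [e3, e2, e1, f2, f1, g1]
    have hm1 : ((m : ℚ) + 1) ≠ 0 := by positivity
    have hm2 : ((m : ℚ) + 2) ≠ 0 := by positivity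
    have hk1 : ((k : ℚ) + 1) ≠ 0 := by positivity
    field_simp [fac_ne]
    push_cast
    ring
  · rcases (show k = n + 1 ∨ k = n + 2 ∨ n + 3 ≤ k by omega) with rfl | rfl | hk
    · -- k = n + 1
      have hf2 : fR (n + 2) (n + 1)
          = (-27 : ℚ) ^ 1 * (Nat.factorial (4 * n + 5) : ℚ)
            / ((Nat.factorial (n + 1) : ℚ) ^ 4 * (Nat.factorial 1 : ℚ)) := by
        have := fR_gen (n + 1) 1
        rw [show (n + 1) + 1 = n + 2 by omega, show 4 * (n + 1) + 1 = 4 * n + 5 by omega] at this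
        exact this
      have hf1 : fR (n + 1) (n + 1)
          = (-27 : ℚ) ^ 0 * (Nat.factorial (4 * n + 4) : ℚ)
            / ((Nat.factorial (n + 1) : ℚ) ^ 4 * (Nat.factorial 0 : ℚ)) := by
        have := fR_gen (n + 1) 0
        rw [show (n + 1) + 0 = n + 1 by omega, show 4 * (n + 1) + 0 = 4 * n + 4 by omega] at this
        exact this
      rw [fR_zero (show n < n + 1 by omega), hf2, hf1]
      unfold gR
      rw [if_pos (show n + 1 + 1 ≤ n + 2 by omega), if_pos (show n + 1 ≤ n + 2 by omega),
          show n + 3 * (n + 1 + 1) = 4 * n + 6 by omega,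
          show n + 2 - (n + 1 + 1) = 0 by omega,
          show n + 3 * (n + 1) = 4 * n + 3 by omega,
          show n + 2 - (n + 1) = 1 by omega,
          show (n : ℤ) - ((n + 1 + 1 : ℕ) : ℤ) = (-2 : ℤ) by push_cast; ring,
          show (n : ℤ) - ((n + 1 : ℕ) : ℤ) = (-1 : ℤ) by push_cast; ring,
          show (-27 : ℚ) ^ (-2 : ℤ) = 1 / 729 by norm_num,
          show (-27 : ℚ) ^ (-1 : ℤ) = -(1 / 27) by norm_num]
      have E3 : (Nat.factorial (4 * n + 6) : ℚ) = (4 * (n : ℚ) + 6) * (Nat.factorial (4 * n + 5) : ℚ) := by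
        rw [show 4 * n + 6 = (4 * n + 5) + 1 by omega, Nat.factorial_succ]; push_cast; ring
      have E2 : (Nat.factorial (4 * n + 5) : ℚ) = (4 * (n : ℚ) + 5) * (Nat.factorial (4 * n + 4) : ℚ) := by
        rw [show 4 * n + 5 = (4 * n + 4) + 1 by omega, Nat.factorial_succ]; push_cast; ring
      have E1 : (Nat.factorial (4 * n + 4) : ℚ) = (4 * (n : ℚ) + 4) * (Nat.factorial (4 * n + 3) : ℚ) := by
        rw [show 4 * n + 4 = (4 * n + 3) + 1 by omega, Nat.factorial_succ]; push_cast; ring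
      have F1 : (Nat.factorial (n + 1 + 1) : ℚ) = ((n : ℚ) + 2) * (Nat.factorial (n + 1) : ℚ) := by
        rw [Nat.factorial_succ]; push_cast; ring
      rw [E3, E2, E1, F1, Nat.factorial_zero, Nat.factorial_one]
      have h1 : ((n : ℚ) + 1) ≠ 0 := by positivity
      have h2 : ((n : ℚ) + 2) ≠ 0 := by positivity
      field_simp [fac_ne]
      push_cast
      ring
    · -- k = n + 2
      have hf2 : fR (n + 2) (n + 2)
          = (-27 : ℚ) ^ 0 * (Nat.factorial (4 * n + 8) : ℚ)
            / ((Nat.factorial (n + 2) : ℚ) ^ 4 * (Nat.factorial 0 : ℚ)) := by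
        have := fR_gen (n + 2) 0
        rw [show (n + 2) + 0 = n + 2 by omega, show 4 * (n + 2) + 0 = 4 * n + 8 by omega] at this
        exact this
      rw [fR_zero (show n < n + 2 by omega), fR_zero (show n + 1 < n + 2 by omega), hf2]
      unfold gR
      rw [if_neg (by omega), if_pos (show n + 2 ≤ n + 2 by omega),
          show n + 3 * (n + 2) = 4 * n + 6 by omega,
          show n + 2 - (n + 2) = 0 by omega,
          show (n : ℤ) - ((n + 2 : ℕ) : ℤ) = (-2 : ℤ) by push_cast; ring,
          show (-27 : ℚ) ^ (-2 : ℤ) = 1 / 729 by norm_num]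
      have E8 : (Nat.factorial (4 * n + 8) : ℚ) = (4 * (n : ℚ) + 8) * (Nat.factorial (4 * n + 7) : ℚ) := by
        rw [show 4 * n + 8 = (4 * n + 7) + 1 by omega, Nat.factorial_succ]; push_cast; ring
      have E7 : (Nat.factorial (4 * n + 7) : ℚ) = (4 * (n : ℚ) + 7) * (Nat.factorial (4 * n + 6) : ℚ) := by
        rw [show 4 * n + 7 = (4 * n + 6) + 1 by omega, Nat.factorial_succ]; push_cast; ring
      rw [E8, E7, Nat.factorial_zero]
      field_simp [fac_ne]
      push_cast
      ring
    · rw [fR_zero (show n < k by omega), fR_zero (show n + 1 < k by omega),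
          fR_zero (show n + 2 < k by omega)]
      unfold gR
      rw [if_neg (by omega), if_neg (by omega)]
      ring


lemma SL_ext (n N : ℕ) (h : n + 1 ≤ N) : SL n = ∑ j ∈ range N, fL n j := by
  unfold SL
  apply Finset.sum_subset (Finset.range_subset_range.2 h)
  intro x _ hx
  simp only [Finset.mem_range, not_lt] at hx
  exact fL_zero (by omega)

lemma SR_ext (n N : ℕ) (h : n + 1 ≤ N) : SR n = ∑ i ∈ range N, fR n i := by
  unfold SR
  apply Finset.sum_subset (Finset.range_subset_range.2 h)
  intro x _ hx
  simp only [Finset.mem_range, not_lt] at hx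
  exact fR_zero (by omega)

lemma recL (n : ℕ) :
    ((n : ℚ) + 2) ^ 3 * SL (n + 2)
      + (2 * (n : ℚ) + 3) * (7 * (n : ℚ) ^ 2 + 21 * n + 17) * SL (n + 1)
      + 81 * ((n : ℚ) + 1) ^ 3 * SL n = 0 := by
  rw [SL_ext n (n + 3) (by omega), SL_ext (n + 1) (n + 3) (by omega),
      show SL (n + 2) = ∑ j ∈ range (n + 3), fL (n + 2) j from rfl,
      Finset.mul_sum, Finset.mul_sum, Finset.mul_sum,
      ← Finset.sum_add_distrib, ← Finset.sum_add_distrib]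
  rw [Finset.sum_congr rfl fun j _ => keyL n j, Finset.sum_range_sub (gL n) (n + 3)]
  have h1 : gL n (n + 3) = 0 := by unfold gL; rw [if_neg (by omega)]
  have h2 : gL n 0 = 0 := by
    unfold gL
    rw [if_pos (by omega)]
    norm_num
  rw [h1, h2]
  ring

lemma recR (n : ℕ) :
    ((n : ℚ) + 2) ^ 3 * SR (n + 2)
      + (2 * (n : ℚ) + 3) * (7 * (n : ℚ) ^ 2 + 21 * n + 17) * SR (n + 1)
      + 81 * ((n : ℚ) + 1) ^ 3 * SR n = 0 := by
  rw [SR_ext n (n + 3) (by omega), SR_ext (n + 1) (n + 3) (by omega),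
      show SR (n + 2) = ∑ i ∈ range (n + 3), fR (n + 2) i from rfl,
      Finset.mul_sum, Finset.mul_sum, Finset.mul_sum,
      ← Finset.sum_add_distrib, ← Finset.sum_add_distrib]
  rw [Finset.sum_congr rfl fun k _ => keyR n k, Finset.sum_range_sub (gR n) (n + 3)]
  have h1 : gR n (n + 3) = 0 := by unfold gR; rw [if_neg (by omega)]
  have h2 : gR n 0 = 0 := by
    unfold gR
    rw [if_pos (by omega)]
    norm_num
  rw [h1, h2]
  ring

lemma SL0 : SL 0 = 1 := by
  unfold SL fL
  norm_num

lemma SR0 : SR 0 = 1 := by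
  unfold SR fR
  norm_num

lemma SL1 : SL 1 = -3 := by
  unfold SL fL
  rw [Finset.sum_range_succ, Finset.sum_range_one]
  norm_num [Nat.choose]

lemma SR1 : SR 1 = -3 := by
  unfold SR fR
  rw [Finset.sum_range_succ, Finset.sum_range_one]
  norm_num [Nat.choose]

lemma SL_eq_SR (n : ℕ) : SL n = SR n := by
  induction n using Nat.strong_induction_on with
  | _ n ih =>
    rcases n with _ | _ | m
    · rw [SL0, SR0]
    · rw [SL1, SR1]
    · have h0 := ih m (by omega)
      have h1 := ih (m + 1) (by omega)
      have rl := recL m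
      have rr := recR m
      rw [h0, h1] at rl
      have hp : ((m : ℚ) + 2) ^ 3 ≠ 0 := by positivity
      have key : ((m : ℚ) + 2) ^ 3 * SL (m + 2) = ((m : ℚ) + 2) ^ 3 * SR (m + 2) := by
        linarith
      exact mul_left_cancel₀ hp key

end AZ11

theorem stmt11 (n : ℕ) :
    ∑ j ∈ Finset.range (n + 1),
        (-1 : ℚ) ^ (n - j) * (3 : ℚ) ^ ((n : ℤ) - 3 * j) * (Nat.factorial (3 * j) : ℚ)
          / (Nat.factorial j : ℚ) ^ 3 * (n.choose (3 * j)) * ((n + j).choose j)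
      = ∑ i ∈ Finset.range (n + 1),
          (((2 * i).choose i : ℚ)) ^ 2 * ((4 * i).choose (2 * i)) * ((n + 3 * i).choose (4 * i))
            * (-3 : ℚ) ^ (3 * (n - i)) := by
  have hL : (∑ j ∈ Finset.range (n + 1),
      (-1 : ℚ) ^ (n - j) * (3 : ℚ) ^ ((n : ℤ) - 3 * j) * (Nat.factorial (3 * j) : ℚ)
        / (Nat.factorial j : ℚ) ^ 3 * (n.choose (3 * j)) * ((n + j).choose j)) = AZ11.SL n := by
    apply Finset.sum_congr rfl
    intro j hj
    simp only [Finset.mem_range] at hj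
    have hsign : (-1 : ℚ) ^ (n - j) = (-1) ^ (n + j) := by
      rw [show n + j = (n - j) + 2 * j by omega, pow_add, pow_mul]
      norm_num
    unfold AZ11.fL
    rw [hsign]
  have hR : (∑ i ∈ Finset.range (n + 1),
      (((2 * i).choose i : ℚ)) ^ 2 * ((4 * i).choose (2 * i)) * ((n + 3 * i).choose (4 * i))
        * (-3 : ℚ) ^ (3 * (n - i))) = AZ11.SR n := by
    apply Finset.sum_congr rfl
    intro i hi
    simp only [Finset.mem_range] at hi
    have hpow : (-3 : ℚ) ^ (3 * (n - i)) = (-27 : ℚ) ^ ((n : ℤ) - i) := by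
      rw [pow_mul, show ((-3 : ℚ)) ^ 3 = -27 by norm_num,
          show (n : ℤ) - i = ((n - i : ℕ) : ℤ) by omega, zpow_natCast]
    unfold AZ11.fR
    rw [hpow]
  rw [hL, hR]
  exact AZ11.SL_eq_SR n
end

section
/- For any non-negative integer n, the Almkvist-Zudilin number gamma_n equals sum_{i=0}^{floor(n/3)} C(2i,i)^2 * C(4i,2i) * C(n+i,4i) * (-3)^{n-3i}. -/
def gammaAZ (n : ℕ) : ℚ :=
  ∑ j ∈ Finset.range (n / 3 + 1),
    (-1 : ℚ) ^ (n - j) * 3 ^ (n - 3 * j) * (Nat.factorial (3 * j) : ℚ)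
      / (Nat.factorial j : ℚ) ^ 3 * (n.choose (3 * j)) * ((n + j).choose j)

theorem stmt12 (n : ℕ) :
    gammaAZ n
      = ∑ i ∈ Finset.range (n / 3 + 1),
          (((2 * i).choose i : ℚ)) ^ 2 * ((4 * i).choose (2 * i)) * ((n + i).choose (4 * i))
            * (-3 : ℚ) ^ (n - 3 * i) := by
  unfold gammaAZ
  refine Finset.sum_congr rfl fun j hj => ?_
  simp only [Finset.mem_range] at hj
  have h3 : 3 * j ≤ n := by omega
  rw [Nat.cast_choose ℚ h3, Nat.cast_choose ℚ (by omega : j ≤ n + j),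
      Nat.cast_choose ℚ (by omega : j ≤ 2 * j), Nat.cast_choose ℚ (by omega : 2 * j ≤ 4 * j),
      Nat.cast_choose ℚ (by omega : 4 * j ≤ n + j),
      (by omega : n + j - j = n), (by omega : 2 * j - j = j),
      (by omega : 4 * j - 2 * j = 2 * j), (by omega : n + j - 4 * j = n - 3 * j)]
  rw [show ((-3 : ℚ)) = -1 * 3 by norm_num, mul_pow,
      show n - j = (n - 3 * j) + 2 * j by omega, pow_add, pow_mul]
  have f0 : ∀ m : ℕ, (m.factorial : ℚ) ≠ 0 := fun m => Nat.cast_ne_zero.mpr m.factorial_ne_zero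
  field_simp
  ring
end

section
/- For any prime p >= 5 and m = floor(p/3), and any integer i with 0 <= i <= m, H_{3i} is congruent modulo p to (1/3)*(H_i + H_{m+i} + H_{m-i} - 2*H_m), where H_n is the n-th harmonic number. -/
lemma key_s18 (m r i : ℕ) (hr : r = 1 ∨ r = 2) (hi : i ≤ m) (p : ℕ) (hpv : p = 3 * m + r) :
    H (3 * i) - (1 / 3) * (H i + H (m + i) + H (m - i) - 2 * H m)
      = p * ∑ t ∈ Finset.range i,
          ((1 : ℚ) / (((3 * t + 3 - r) * (3 * (m + t + 1)) : ℕ) : ℚ)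
            + (1 : ℚ) / (((3 * t + r) * (3 * (m - t)) : ℕ) : ℚ)) := by
  induction i with
  | zero => simp [H]; ring
  | succ i ih =>
    have hi' : i ≤ m := Nat.le_of_succ_le hi
    have him : i < m := hi
    have e1 : 3 * (i + 1) = 3 * i + 1 + 1 + 1 := by ring
    have e2 : m + (i + 1) = (m + i) + 1 := by ring
    have e3 : m - i = (m - (i + 1)) + 1 := by omega
    have ih' := ih hi'
    rw [e3, H_succ] at ih'
    rw [e1, H_succ, H_succ, H_succ, e2, H_succ, H_succ, Finset.sum_range_succ, mul_add, ← ih']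
    have hmi : ((m - (i + 1) : ℕ) : ℚ) = (m : ℚ) - (i : ℚ) - 1 := by
      push_cast [Nat.cast_sub hi]; ring
    have hm0 : (0:ℚ) < (m:ℚ) - i := by
      have : (i:ℚ) < m := by exact_mod_cast him
      linarith
    have d1 : (3 * (i:ℚ) + 1) ≠ 0 := by positivity
    have d2 : (3 * (i:ℚ) + 2) ≠ 0 := by positivity
    have d3 : ((i:ℚ) + 1) ≠ 0 := by positivity
    have d4 : ((m:ℚ) + i + 1) ≠ 0 := by positivity
    have d5 : ((m:ℚ) - i) ≠ 0 := ne_of_gt hm0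
    have k3 : (1:ℚ)/(3*(i:ℚ)+3) = 1/3 * (1/((i:ℚ)+1)) := by
      rw [show (3*(i:ℚ)+3) = 3*((i:ℚ)+1) by ring]
      rw [one_div, mul_inv, one_div]
      ring
    rcases hr with rfl | rfl <;> subst hpv
    · have ha : 3 * i + 3 - 1 = 3 * i + 2 := by omega
      rw [ha]
      have k1 : ((3*m+1 : ℕ):ℚ) * ((1:ℚ) / (((3 * i + 2) * (3 * (m + i + 1)) : ℕ) : ℚ))
          = 1/(3*(i:ℚ)+2) - 1/3 * (1/((m:ℚ)+i+1)) := by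
        push_cast
        field_simp
        ring
      have k2 : ((3*m+1 : ℕ):ℚ) * ((1:ℚ) / (((3 * i + 1) * (3 * (m - i)) : ℕ) : ℚ))
          = 1/(3*(i:ℚ)+1) + 1/3 * (1/((m:ℚ)-i)) := by
        push_cast [Nat.cast_sub hi']
        field_simp
        ring
      push_cast [hmi, Nat.cast_sub hi'] at *
      linear_combination (-1 : ℚ) * k1 - k2 + k3
    · have ha : 3 * i + 3 - 2 = 3 * i + 1 := by omega
      rw [ha]
      have k1 : ((3*m+2 : ℕ):ℚ) * ((1:ℚ) / (((3 * i + 1) * (3 * (m + i + 1)) : ℕ) : ℚ))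
          = 1/(3*(i:ℚ)+1) - 1/3 * (1/((m:ℚ)+i+1)) := by
        push_cast
        field_simp
        ring
      have k2 : ((3*m+2 : ℕ):ℚ) * ((1:ℚ) / (((3 * i + 2) * (3 * (m - i)) : ℕ) : ℚ))
          = 1/(3*(i:ℚ)+2) + 1/3 * (1/((m:ℚ)-i)) := by
        push_cast [Nat.cast_sub hi']
        field_simp
        ring
      push_cast [hmi, Nat.cast_sub hi'] at *
      linear_combination (-1 : ℚ) * k1 - k2 + k3

lemma den_one_div (p n : ℕ) (h : ¬ p ∣ n) (hn : 0 < n) : ¬ p ∣ ((1 : ℚ) / n).den := by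
  rw [one_div, Rat.inv_natCast_den_of_pos hn]; exact h

lemma den_sum {α : Type*} (p : ℕ) (hp : p.Prime) (s : Finset α) (f : α → ℚ)
    (h : ∀ a ∈ s, ¬ p ∣ (f a).den) : ¬ p ∣ (∑ a ∈ s, f a).den := by
  classical
  induction s using Finset.cons_induction with
  | empty => simpa using hp.one_lt.ne'
  | cons a s ha ih =>
    rw [Finset.sum_cons]
    intro hd
    have hdvd := hd.trans (Rat.add_den_dvd (f a) (∑ x ∈ s, f x))
    rcases hp.dvd_mul.mp hdvd with h1 | h2
    · exact h a (Finset.mem_cons_self a s) h1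
    · exact ih (fun b hb => h b (Finset.mem_cons_of_mem hb)) h2

theorem stmt18 (p : ℕ) (hp : p.Prime) (h5 : 5 ≤ p) (i : ℕ) (hi : i ≤ p / 3) :
    ∃ c : ℚ,
      H (3 * i) - (1 / 3) * (H i + H (p / 3 + i) + H (p / 3 - i) - 2 * H (p / 3))
        = p * c ∧ ¬ (p ∣ c.den) := by
  set m := p / 3 with hm
  set r := p % 3 with hr
  have h3 : ¬ 3 ∣ p := by
    intro h
    rcases (hp.eq_one_or_self_of_dvd 3 h) with h' | h' <;> omega
  have hr12 : r = 1 ∨ r = 2 := by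
    have := Nat.mod_lt p (show 0 < 3 by norm_num)
    have : r ≠ 0 := fun h => h3 (Nat.dvd_of_mod_eq_zero h)
    omega
  have hpv : p = 3 * m + r := by
    rw [hm, hr]; omega
  refine ⟨∑ t ∈ Finset.range i,
      ((1 : ℚ) / (((3 * t + 3 - r) * (3 * (m + t + 1)) : ℕ) : ℚ)
        + (1 : ℚ) / (((3 * t + r) * (3 * (m - t)) : ℕ) : ℚ)), key_s18 m r i hr12 hi p hpv, ?_⟩
  apply den_sum p hp
  intro t ht
  have htm : t < i := Finset.mem_range.mp ht
  have hti : t < m := lt_of_lt_of_le htm hi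
  have not_dvd_small : ∀ n : ℕ, 0 < n → n < p → ¬ p ∣ n := by
    intro n h1 h2 hd
    exact absurd (Nat.le_of_dvd h1 hd) (not_le.mpr h2)
  have hA : ¬ p ∣ (3 * t + 3 - r) * (3 * (m + t + 1)) := by
    intro hd
    rcases hp.dvd_mul.mp hd with h1 | h1
    · exact not_dvd_small _ (by omega) (by omega) h1
    · rcases hp.dvd_mul.mp h1 with h2 | h2
      · exact absurd (Nat.le_of_dvd (by norm_num) h2) (by omega)
      · exact not_dvd_small _ (by omega) (by omega) h2
  have hB : ¬ p ∣ (3 * t + r) * (3 * (m - t)) := by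
    intro hd
    rcases hp.dvd_mul.mp hd with h1 | h1
    · exact not_dvd_small _ (by omega) (by omega) h1
    · rcases hp.dvd_mul.mp h1 with h2 | h2
      · exact absurd (Nat.le_of_dvd (by norm_num) h2) (by omega)
      · exact not_dvd_small _ (by omega) (by omega) h2
  intro hd
  have := hd.trans (Rat.add_den_dvd _ _)
  rcases hp.dvd_mul.mp this with h1 | h1
  · exact den_one_div p _ hA (Nat.mul_pos (by omega) (by omega)) h1
  · exact den_one_div p _ hB (Nat.mul_pos (by omega) (by omega)) h1
end
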